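/- arXiv:math/9904095 — 5 statements merged into one kernel-verified Lean document; each statement's English description precedes it below -/
import Mathlib

section
/- Let f_{y,a}(z) = ∑_{n≥0} C(y-a(n-1), n) z^n and g_{y,a}(z) = ∑_{n≥0} (y/(y-an)) C(y-an, n) z^n as formal power series in z over ℚ(y)[a] (or with y,a rational and y-an ≠ 0). Then the derivative satisfies g'_{y,a}(z) = y·f_{y-2a-1,a}(z). -/
open PowerSeries Finset

/-- Generalized binomial coefficient `C(x,n) = x(x-1)⋯(x-n+1)/n!`. -/
noncomputable def gchoose (x : ℚ) (n : ℕ) : ℚ :=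
  (∏ i ∈ Finset.range n, (x - i)) / n.factorial

/-- `f_{y,a}(z) = ∑_{n≥0} C(y-a(n-1),n) z^n`. -/
noncomputable def fSeries (y a : ℚ) : PowerSeries ℚ :=
  PowerSeries.mk fun n => gchoose (y - a * ((n : ℚ) - 1)) n

/-- `g_{y,a}(z) = ∑_{n≥0} (y/(y-an)) C(y-an,n) z^n`, with the `n`-th coefficient
interpreted as `y·C(y-an-1,n-1)/n` for `n ≥ 1` and constant term `1`. -/
noncomputable def gSeries (y a : ℚ) : PowerSeries ℚ :=
  PowerSeries.mk fun n =>
    if n = 0 then 1 else y * gchoose (y - a * (n : ℚ) - 1) (n - 1) / (n : ℚ)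

/-- The formal derivative satisfies `g'_{y,a}(z) = y · f_{y-2a-1,a}(z)`. -/
theorem stmt2 (y a : ℚ) :
    d⁄dX ℚ (gSeries y a) = PowerSeries.C y * fSeries (y - 2 * a - 1) a := by
  ext n
  rw [coeff_derivative, coeff_C_mul, gSeries, fSeries, coeff_mk, coeff_mk]
  simp only [Nat.add_sub_cancel, Nat.succ_ne_zero, if_false, Nat.cast_add, Nat.cast_one]
  have h : y - a * ((n : ℚ) + 1) - 1 = y - 2 * a - 1 - a * ((n : ℚ) - 1) := by ring
  rw [h]
  field_simp
end

section
/- Define g_{y,a}(z) = ∑_{n≥0} (y/(y-an)) C(y-an,n) z^n (with nth coefficient interpreted as y·C(y-an-1,n-1)/n for n≥1, constant term 1). Then g_{y,a} = (g_{1,a})^y in the sense that for all rational y, g_{y,a}(z) equals the y-th power series power (1+w)^y := ∑_k C(y,k) w^k where g_{1,a} = 1 + w with w a power series with zero constant term. -/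
open PowerSeries Finset

/-- The binomial-series power `(1+w)^y := ∑_k C(y,k) w^k` of `1 + w`, for `w` a power
series with zero constant term (the coefficient of `z^n` in `w^k` vanishes for `k > n`,
so each coefficient is the indicated finite sum). -/
noncomputable def binPow (w : PowerSeries ℚ) (y : ℚ) : PowerSeries ℚ :=
  PowerSeries.mk fun n =>
    ∑ k ∈ Finset.range (n + 1), gchoose y k * PowerSeries.coeff n (w ^ k)

lemma gchoose_zero (x : ℚ) : gchoose x 0 = 1 := by simp [gchoose]

lemma fact_ne (n : ℕ) : (n.factorial : ℚ) ≠ 0 := by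
  exact_mod_cast n.factorial_ne_zero

lemma gchoose_succ (x : ℚ) (n : ℕ) :
    gchoose x (n+1) = gchoose x n * (x - n) / (n+1) := by
  unfold gchoose
  rw [Finset.prod_range_succ, Nat.factorial_succ]
  push_cast
  rw [div_mul_eq_mul_div, div_div, mul_comm ((n:ℚ)+1)]

lemma gchoose_pascal (x : ℚ) (n : ℕ) :
    gchoose x (n+1) = gchoose (x-1) (n+1) + gchoose (x-1) n := by
  have h1 : ∏ i ∈ range (n+1), (x - i) = (∏ i ∈ range n, (x - 1 - i)) * x := by
    rw [Finset.prod_range_succ']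
    congr 1
    · exact Finset.prod_congr rfl (fun i _ => by push_cast; ring)
    · simp
  have h2 : ∏ i ∈ range (n+1), (x - 1 - i) =
      (∏ i ∈ range n, (x - 1 - i)) * (x - 1 - n) := Finset.prod_range_succ _ _
  unfold gchoose
  rw [h1, h2, Nat.factorial_succ]
  have h3 := fact_ne n
  have h4 : ((n:ℚ)+1) ≠ 0 := by positivity
  push_cast
  field_simp
  ring

noncomputable def Afun (a : ℚ) (n : ℕ) (y : ℚ) : ℚ :=
  if n = 0 then 1 else y * gchoose (y - a * (n : ℚ) - 1) (n - 1) / (n : ℚ)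

lemma Afun_zero (a y : ℚ) : Afun a 0 y = 1 := by simp [Afun]

lemma Afun_succ (a y : ℚ) (n : ℕ) :
    Afun a (n+1) y = y * gchoose (y - a * ((n:ℚ)+1) - 1) n / ((n:ℚ)+1) := by
  simp [Afun]

lemma Afun_at_zero (a : ℚ) (n : ℕ) (h : n ≠ 0) : Afun a n 0 = 0 := by
  simp [Afun, h]

lemma Afun_pascal (a : ℚ) (n : ℕ) (x : ℚ) :
    Afun a (n+1) x = Afun a (n+1) (x-1) + Afun a n (x-1-a) := by
  cases n with
  | zero =>
      rw [Afun_succ, Afun_succ, Afun_zero]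
      simp [gchoose]
  | succ m =>
      rw [Afun_succ, Afun_succ, Afun_succ]
      push_cast
      set u : ℚ := x - a * (((m:ℚ)+1)+1) - 1 with hu
      have e1 : x - a * (((m:ℚ)+1)+1) - 1 = u := rfl
      have e2 : x - 1 - a * (((m:ℚ)+1)+1) - 1 = u - 1 := by rw [hu]; ring
      have e3 : x - 1 - a - a * ((m:ℚ)+1) - 1 = u - 1 := by rw [hu]; ring
      rw [e2, e3]
      rw [gchoose_pascal u m, gchoose_succ (u-1) m]
      have hm1 : ((m:ℚ)+1) ≠ 0 := by positivity
      have hm2 : ((m:ℚ)+1+1) ≠ 0 := by positivity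
      have hx : x = u + a * (((m:ℚ)+1)+1) + 1 := by rw [hu]; ring
      rw [hx]
      field_simp
      ring

def IsPolyFun (f : ℚ → ℚ) : Prop := ∃ p : Polynomial ℚ, ∀ t, f t = p.eval t

lemma IsPolyFun.congr {f g : ℚ → ℚ} (hf : IsPolyFun f) (h : ∀ t, f t = g t) :
    IsPolyFun g := by
  obtain ⟨p, hp⟩ := hf
  exact ⟨p, fun t => (h t).symm.trans (hp t)⟩

lemma IsPolyFun.const (c : ℚ) : IsPolyFun (fun _ => c) :=
  ⟨Polynomial.C c, by simp⟩

lemma IsPolyFun.add {f g : ℚ → ℚ} (hf : IsPolyFun f) (hg : IsPolyFun g) :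
    IsPolyFun (fun t => f t + g t) := by
  obtain ⟨p, hp⟩ := hf; obtain ⟨q, hq⟩ := hg
  exact ⟨p + q, fun t => by simp [hp, hq]⟩

lemma IsPolyFun.sub {f g : ℚ → ℚ} (hf : IsPolyFun f) (hg : IsPolyFun g) :
    IsPolyFun (fun t => f t - g t) := by
  obtain ⟨p, hp⟩ := hf; obtain ⟨q, hq⟩ := hg
  exact ⟨p - q, fun t => by simp [hp, hq]⟩

lemma IsPolyFun.mul {f g : ℚ → ℚ} (hf : IsPolyFun f) (hg : IsPolyFun g) :
    IsPolyFun (fun t => f t * g t) := by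
  obtain ⟨p, hp⟩ := hf; obtain ⟨q, hq⟩ := hg
  exact ⟨p * q, fun t => by simp [hp, hq]⟩

lemma IsPolyFun.sum {s : Finset ℕ} {f : ℕ → ℚ → ℚ}
    (h : ∀ k ∈ s, IsPolyFun (f k)) : IsPolyFun (fun t => ∑ k ∈ s, f k t) := by
  classical
  induction s using Finset.induction with
  | empty => exact (IsPolyFun.const 0).congr (by simp)
  | @insert b s' hx ih =>
      have := ((h b (by simp)).add (ih (fun k hk => h k (by simp [hk]))))
      exact this.congr (fun t => by rw [Finset.sum_insert hx])

lemma isPolyFun_gchoose (d : ℚ) (m : ℕ) : IsPolyFun (fun t => gchoose (t + d) m) := by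
  refine ⟨Polynomial.C ((m.factorial : ℚ))⁻¹ * ∏ i ∈ Finset.range m,
    (Polynomial.X + Polynomial.C (d - i)), fun t => ?_⟩
  rw [Polynomial.eval_mul, Polynomial.eval_prod]
  simp only [Polynomial.eval_add, Polynomial.eval_X, Polynomial.eval_C]
  rw [gchoose, div_eq_inv_mul]
  congr 1
  exact Finset.prod_congr rfl (fun i _ => by ring)

lemma isPolyFun_Afun (a c : ℚ) (n : ℕ) : IsPolyFun (fun t => Afun a n (t + c)) := by
  cases n with
  | zero => exact (IsPolyFun.const 1).congr (fun t => by rw [Afun_zero])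
  | succ m =>
      have h1 : IsPolyFun (fun t => t + c) := ⟨Polynomial.X + Polynomial.C c, by simp⟩
      have h2 := isPolyFun_gchoose (c - a * ((m:ℚ)+1) - 1) m
      have h3 := (h1.mul h2).mul (IsPolyFun.const ((m:ℚ)+1)⁻¹)
      refine h3.congr (fun t => ?_)
      rw [Afun_succ]
      have : t + c - a * ((m:ℚ)+1) - 1 = t + (c - a * ((m:ℚ)+1) - 1) := by ring
      rw [this, div_eq_mul_inv]

lemma polyfun_eq_zero_of_nat {f : ℚ → ℚ} (hf : IsPolyFun f)
    (h : ∀ m : ℕ, f (m : ℚ) = 0) : ∀ t, f t = 0 := by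
  obtain ⟨p, hp⟩ := hf
  have hp0 : p = 0 := by
    apply Polynomial.eq_zero_of_infinite_isRoot
    refine Set.infinite_of_injective_forall_mem (f := fun m : ℕ => (m : ℚ))
      (fun m n h => Nat.cast_injective h) (fun m => ?_)
    simp only [Set.mem_setOf_eq, Polynomial.IsRoot]
    rw [← hp]; exact h m
  intro t; rw [hp, hp0, Polynomial.eval_zero]

lemma polyfun_eq_zero_of_periodic {f : ℚ → ℚ} (hf : IsPolyFun f)
    (hper : ∀ t, f t = f (t - 1)) (h0 : f 0 = 0) : ∀ t, f t = 0 := by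
  apply polyfun_eq_zero_of_nat hf
  intro m
  induction m with
  | zero => exact_mod_cast h0
  | succ k ih =>
      have := hper ((k:ℚ) + 1)
      push_cast
      rw [this]; simpa using ih

lemma rothe (a : ℚ) (n : ℕ) : ∀ x y : ℚ,
    ∑ k ∈ range (n+1), Afun a k x * Afun a (n-k) y = Afun a n (x+y) := by
  induction n with
  | zero => intro x y; simp [Afun_zero]
  | succ n ih =>
      intro x y
      set F : ℚ → ℚ := fun t =>
        (∑ k ∈ range (n+2), Afun a k x * Afun a (n+1-k) t) - Afun a (n+1) (x+t) with hF
      have hstep : ∀ t, F t = F (t - 1) := by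
        intro t
        have hsum : ∑ k ∈ range (n+2), Afun a k x * Afun a (n+1-k) t
            = (∑ k ∈ range (n+2), Afun a k x * Afun a (n+1-k) (t-1))
              + Afun a n (x + (t-1-a)) := by
          have hterm : ∀ k ∈ range (n+1), Afun a k x * Afun a (n+1-k) t
              = Afun a k x * Afun a (n+1-k) (t-1) + Afun a k x * Afun a (n-k) (t-1-a) := by
            intro k hk
            have hk' : k ≤ n := by simpa [Nat.lt_succ_iff] using hk
            have h1 : n + 1 - k = (n - k) + 1 := by omega
            rw [h1, Afun_pascal a (n-k) t, mul_add]
          rw [Finset.sum_range_succ, Finset.sum_range_succ (n := n+1)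
            (f := fun k => Afun a k x * Afun a (n+1-k) (t-1)),
            Finset.sum_congr rfl hterm, Finset.sum_add_distrib, ih x (t-1-a)]
          simp only [Nat.sub_self, Afun_zero]
          ring
        have hrhs : Afun a (n+1) (x+t) = Afun a (n+1) (x+t-1) + Afun a n (x+t-1-a) :=
          Afun_pascal a n (x+t)
        simp only [hF]
        rw [hsum, hrhs]
        have e1 : x + (t - 1 - a) = x + t - 1 - a := by ring
        have e2 : x + (t-1) = x + t - 1 := by ring
        rw [e1, e2]
        abel
      have hpoly : IsPolyFun F := by
        apply IsPolyFun.sub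
        · apply IsPolyFun.sum
          intro k _
          exact (IsPolyFun.const (Afun a k x)).mul
            ((isPolyFun_Afun a 0 (n+1-k)).congr (fun t => by rw [add_zero]))
        · exact (isPolyFun_Afun a x (n+1)).congr (fun t => by rw [add_comm t x])
      have h0 : F 0 = 0 := by
        simp only [hF]
        rw [Finset.sum_eq_single (n+1)]
        · simp [Nat.sub_self, Afun_zero]
        · intro k hk hne
          have : n + 1 - k ≠ 0 := by
            simp only [Finset.mem_range] at hk; omega
          rw [Afun_at_zero a _ this, mul_zero]
        · intro h; simp at h
      have := polyfun_eq_zero_of_periodic hpoly hstep h0 y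
      simpa only [hF, sub_eq_zero] using this

lemma coeff_gSeries (y a : ℚ) (n : ℕ) :
    PowerSeries.coeff n (gSeries y a) = Afun a n y := by
  simp [gSeries, Afun]

lemma gSeries_mul (a x y : ℚ) : gSeries x a * gSeries y a = gSeries (x+y) a := by
  ext n
  rw [PowerSeries.coeff_mul, Finset.Nat.sum_antidiagonal_eq_sum_range_succ_mk]
  simp only [coeff_gSeries]
  exact rothe a n x y

lemma gSeries_zero (a : ℚ) : gSeries 0 a = 1 := by
  ext n
  rw [coeff_gSeries, PowerSeries.coeff_one]
  rcases Nat.eq_zero_or_pos n with h | h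
  · simp [h, Afun]
  · rw [Afun_at_zero a n (by omega), if_neg (by omega)]

lemma gSeries_nat (a : ℚ) (m : ℕ) : gSeries (m : ℚ) a = (gSeries 1 a)^m := by
  induction m with
  | zero => simpa using gSeries_zero a
  | succ k ih =>
      have : ((k:ℚ) + 1) = (k:ℚ) + 1 := rfl
      push_cast
      rw [← gSeries_mul a k 1, ih, pow_succ]

lemma gchoose_natCast (m : ℕ) : ∀ k, gchoose (m : ℚ) k = m.choose k := by
  intro k
  induction k with
  | zero => simp [gchoose]
  | succ k ih =>
      rcases le_or_gt (k+1) m with h | h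
      · rw [gchoose_succ, ih]
        have hk : ((k:ℚ) + 1) ≠ 0 := by positivity
        rw [div_eq_iff hk]
        have hcast := congrArg (Nat.cast : ℕ → ℚ) (Nat.choose_succ_right_eq m k)
        push_cast [Nat.cast_sub (by omega : k ≤ m)] at hcast
        linarith [hcast]
      · have h1 : m.choose (k+1) = 0 := Nat.choose_eq_zero_of_lt h
        have h2 : gchoose (m:ℚ) (k+1) = 0 := by
          unfold gchoose
          rw [Finset.prod_eq_zero (Finset.mem_range.mpr h) (by simp)]
          simp
        rw [h1, h2]; simp

lemma coeff_w_pow_eq_zero (a : ℚ) (n k : ℕ) (h : n < k) :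
    PowerSeries.coeff n ((gSeries 1 a - 1) ^ k) = 0 := by
  have hconst : PowerSeries.constantCoeff (gSeries 1 a - 1) = 0 := by
    rw [map_sub]
    rw [← PowerSeries.coeff_zero_eq_constantCoeff_apply, coeff_gSeries]
    simp [Afun]
  have hdvd : (PowerSeries.X : ℚ⟦X⟧) ^ k ∣ (gSeries 1 a - 1) ^ k :=
    pow_dvd_pow_of_dvd (PowerSeries.X_dvd_iff.mpr hconst) k
  exact (PowerSeries.X_pow_dvd_iff.mp hdvd) n h

lemma binPow_nat (a : ℚ) (m : ℕ) :
    binPow (gSeries 1 a - 1) (m : ℚ) = (gSeries 1 a)^m := by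
  set w := gSeries 1 a - 1 with hw
  ext n
  rw [binPow, PowerSeries.coeff_mk]
  have hrhs : (gSeries 1 a)^m = ∑ k ∈ range (m+1), w^k * ((m.choose k : ℚ⟦X⟧)) := by
    have : gSeries 1 a = w + 1 := by rw [hw]; ring
    rw [this, add_pow]
    exact Finset.sum_congr rfl (fun k _ => by push_cast; ring)
  rw [hrhs, map_sum]
  have hL : ∑ k ∈ range (n+1), gchoose (m:ℚ) k * PowerSeries.coeff n (w ^ k)
      = ∑ k ∈ range (n+m+1), gchoose (m:ℚ) k * PowerSeries.coeff n (w ^ k) := by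
    apply Finset.sum_subset
    · apply Finset.range_subset_range.mpr; omega
    · intro k _ hk
      have : n < k := by simp only [Finset.mem_range, not_lt] at hk ⊢; omega
      rw [coeff_w_pow_eq_zero a n k this, mul_zero]
  have hR : ∑ k ∈ range (m+1), PowerSeries.coeff n (w^k * ((m.choose k : ℚ⟦X⟧)))
      = ∑ k ∈ range (n+m+1), gchoose (m:ℚ) k * PowerSeries.coeff n (w ^ k) := by
    rw [Finset.sum_subset (Finset.range_subset_range.mpr (by omega : m+1 ≤ n+m+1))]
    · apply Finset.sum_congr rfl
      intro k _
      have : ((m.choose k : ℚ⟦X⟧)) = PowerSeries.C ((m.choose k : ℚ)) := by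
        push_cast; simp
      rw [this, PowerSeries.coeff_mul_C, gchoose_natCast, mul_comm]
    · intro k _ hk
      have hk' : m < k := by simp only [Finset.mem_range, not_lt] at hk; omega
      have : ((m.choose k : ℚ⟦X⟧)) = 0 := by
        rw [Nat.choose_eq_zero_of_lt hk']; simp
      rw [this, mul_zero, map_zero]
  rw [hL, ← hR]

/-- `g_{y,a} = (g_{1,a})^y`, where the `y`-th power of `g_{1,a} = 1 + w`
(`w` has zero constant term) is the binomial series `∑_k C(y,k) w^k`. -/
theorem stmt4 (y a : ℚ) :
    gSeries y a = binPow (gSeries 1 a - 1) y := by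
  ext n
  set w := gSeries 1 a - 1 with hw
  set e : ℕ → ℚ := fun k => PowerSeries.coeff n (w ^ k) with he
  have key : ∀ t : ℚ,
      (∑ k ∈ range (n+1), gchoose t k * e k) - Afun a n t = 0 := by
    apply polyfun_eq_zero_of_nat
    · apply IsPolyFun.sub
      · apply IsPolyFun.sum
        intro k _
        exact ((isPolyFun_gchoose 0 k).congr (fun t => by rw [add_zero])).mul
          (IsPolyFun.const (e k))
      · exact (isPolyFun_Afun a 0 n).congr (fun t => by rw [add_zero])
    · intro m
      have h1 : Afun a n (m:ℚ) = PowerSeries.coeff n ((gSeries 1 a)^m) := by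
        rw [← gSeries_nat, coeff_gSeries]
      have h2 : (∑ k ∈ range (n+1), gchoose (m:ℚ) k * e k)
          = PowerSeries.coeff n ((gSeries 1 a)^m) := by
        rw [← binPow_nat a m, binPow, PowerSeries.coeff_mk]
      rw [h1, h2, sub_self]
  have := key y
  rw [sub_eq_zero] at this
  rw [coeff_gSeries, binPow, PowerSeries.coeff_mk, ← this]
end

section
/- Define χ_n(y) = ∑_p b_{2p}(n) y^p where b_{2p}(n) = ∑_{n₁+n₂+n₃+n₄=n} ∑_{r₄-r₁=p-n} p(n₁,r₁)p(n₂)p(n₃)p(n₄,r₄). Then ∑_{n≥0} χ_n(y) z^n = ∏_{k≥1} (1-y^{k-1}z^k)^{-1}(1-y^k z^k)^{-2}(1-y^{k+1}z^k)^{-1} as formal power series. -/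
open PowerSeries Polynomial Finset

/-- `p(n,r)`: the number of partitions of `n` into exactly `r` parts. -/
noncomputable def partCount (n r : ℕ) : ℕ :=
  Nat.card {p : n.Partition // Multiset.card p.parts = r}

/-- `p(n)`: the number of partitions of `n`. -/
noncomputable def partNum (n : ℕ) : ℕ := Nat.card n.Partition

/-- `b_{2p}(n) = ∑_{n₁+n₂+n₃+n₄=n} ∑_{r₄-r₁=p-n} p(n₁,r₁)p(n₂)p(n₃)p(n₄,r₄)`. -/
noncomputable def bP1P1 (n p : ℕ) : ℕ :=
  ∑ t ∈ Finset.Nat.antidiagonalTuple 4 n,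
    ∑ r₁ ∈ Finset.range (t 0 + 1), ∑ r₄ ∈ Finset.range (t 3 + 1),
      if (r₄ : ℤ) - r₁ = (p : ℤ) - n then
        partCount (t 0) r₁ * partNum (t 1) * partNum (t 2) * partCount (t 3) r₄
      else 0

/-- `χ_n(y) = ∑_p b_{2p}(n) y^p` (only `p ≤ 2n` contribute). -/
noncomputable def chiP1P1 (n : ℕ) : Polynomial ℚ :=
  ∑ p ∈ Finset.range (2 * n + 1), (bP1P1 n p : ℚ) • (Polynomial.X : Polynomial ℚ) ^ p



open scoped Classical

noncomputable section AuxSec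

variable {α : Type*} [CommRing α]

noncomputable def geomW (f : ℕ → α) (k : ℕ) : PowerSeries α :=
  PowerSeries.mk fun m => if k ∣ m then f k ^ (m / k) else 0

noncomputable def partGF (f : ℕ → α) : PowerSeries α :=
  PowerSeries.mk fun m => ∑ p : m.Partition, (p.parts.map f).prod

lemma geomW_inv (f : ℕ → α) (k : ℕ) (hk : 0 < k) :
    (1 - PowerSeries.C (R := α) (f k) * PowerSeries.X ^ k) * geomW f k = 1 := by
  ext n
  rw [sub_mul, one_mul, map_sub, PowerSeries.coeff_one]
  have h1 : (PowerSeries.coeff (R := α) n) (PowerSeries.C (R := α) (f k) * PowerSeries.X ^ k * geomW f k)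
      = if k ≤ n then f k * (if k ∣ n - k then f k ^ ((n - k) / k) else 0) else 0 := by
    rw [mul_assoc, PowerSeries.coeff_C_mul]
    rcases le_or_gt k n with h | h
    · rw [if_pos h]
      obtain ⟨m, rfl⟩ := Nat.exists_eq_add_of_le h
      rw [mul_comm ((PowerSeries.X : PowerSeries α) ^ k) (geomW f k), add_comm k m, PowerSeries.coeff_mul_X_pow, geomW, coeff_mk]
      simp
    · rw [if_neg (not_le.mpr h)]
      rw [PowerSeries.coeff_mul]
      rw [Finset.sum_eq_zero, mul_zero]
      intro ij hij
      rw [PowerSeries.coeff_X_pow, if_neg, zero_mul]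
      have := Finset.HasAntidiagonal.mem_antidiagonal.mp hij
      omega
  rw [h1, geomW, coeff_mk]
  rcases eq_or_ne n 0 with rfl | hn0
  · rw [if_pos rfl, if_pos (dvd_zero k), if_neg (by omega), Nat.zero_div, pow_zero, sub_zero]
  · rw [if_neg hn0]
    by_cases hdvd : k ∣ n
    · have hkn : k ≤ n := Nat.le_of_dvd (Nat.pos_of_ne_zero hn0) hdvd
      rw [if_pos hdvd, if_pos hkn, if_pos ((Nat.dvd_sub hdvd (dvd_refl k)))]
      rw [← pow_succ']
      rw [sub_eq_zero]
      congr 1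
      obtain ⟨c, rfl⟩ := hdvd
      have hc : c ≠ 0 := by rintro rfl; simp at hn0
      rw [Nat.mul_div_cancel_left _ hk]
      have h2 : k * c - k = k * (c - 1) := by
        rw [← Nat.mul_pred]
        congr 1
      rw [h2, Nat.mul_div_cancel_left _ hk]
      omega
    · rw [if_neg hdvd]
      rcases le_or_gt k n with h | h
      · rw [if_pos h, if_neg, mul_zero, sub_zero]
        intro hd
        have h2 := Nat.dvd_add hd (dvd_refl k)
        rw [Nat.sub_add_cancel h] at h2
        exact hdvd h2
      · rw [if_neg (not_le.mpr h), sub_zero]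

lemma coeff_prod_geomW (f : ℕ → α) (n : ℕ) (s : Finset ℕ) (hs : ∀ i ∈ s, 0 < i) :
    (PowerSeries.coeff (R := α) n) (∏ i ∈ s, geomW f i) =
      ∑ p ∈ (univ : Finset n.Partition).filter (fun p => ∀ j ∈ p.parts, j ∈ s),
        (p.parts.map f).prod := by
  rw [PowerSeries.coeff_prod]
  simp_rw [geomW, coeff_mk]
  rw [← Finset.sum_filter_of_ne (p := fun μ : ℕ →₀ ℕ => ∀ i ∈ s, i ∣ μ i)]
  · symm
    refine Finset.sum_bij (i := fun (p : n.Partition) (hp : p ∈ _) =>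
      (⟨p.parts.toFinset, fun i => p.parts.count i * i, fun i => by
        simp only [Multiset.mem_toFinset, ne_eq, mul_eq_zero, not_or,
          Multiset.count_eq_zero, not_not]
        exact ⟨fun hi => ⟨hi, (p.parts_pos hi).ne'⟩, fun h => h.1⟩⟩ : ℕ →₀ ℕ)) ?_ ?_ ?_ ?_
    · -- maps to
      intro p hp
      simp only [mem_filter, mem_univ, true_and] at hp
      rw [Finset.mem_filter, Finset.mem_finsuppAntidiag]
      refine ⟨⟨?_, fun i hi => hp i (by simpa using hi)⟩, fun i _ => Dvd.intro_left _ rfl⟩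
      · dsimp only [Finsupp.coe_mk]
        conv_rhs => rw [← p.parts_sum]
        rw [Finset.sum_multiset_count_of_subset _ s (fun i => by
          simp only [Multiset.mem_toFinset]; exact hp i)]
        simp [Nat.smul_one_eq_cast]
    · -- inj
      intro p₁ hp₁ p₂ hp₂ h
      apply Nat.Partition.ext
      ext i
      simp only [Finsupp.mk.injEq] at h
      by_cases hi : i = 0
      · subst hi
        rw [Multiset.count_eq_zero_of_notMem (fun ha => lt_irrefl 0 (p₁.parts_pos ha)),
          Multiset.count_eq_zero_of_notMem (fun ha => lt_irrefl 0 (p₂.parts_pos ha))]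
      · have h2 := congrFun h.2 i
        exact Nat.eq_of_mul_eq_mul_right (Nat.pos_of_ne_zero hi) h2
    · -- surj
      intro μ hμ
      rw [Finset.mem_filter, Finset.mem_finsuppAntidiag] at hμ
      obtain ⟨⟨hsum, hsupp⟩, hdvd⟩ := hμ
      refine ⟨⟨∑ i ∈ s, Multiset.replicate (μ i / i) i, ?_, ?_⟩, ?_, ?_⟩
      · intro i hi
        rw [Multiset.mem_sum] at hi
        obtain ⟨j, hj, hij⟩ := hi
        rw [Multiset.eq_of_mem_replicate hij]
        exact hs j hj
      · simp_rw [Multiset.sum_sum, Multiset.sum_replicate, Nat.nsmul_eq_mul]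
        rw [← hsum]
        exact Finset.sum_congr rfl fun i hi => Nat.div_mul_cancel (hdvd i hi)
      · simp only [mem_filter, mem_univ, true_and]
        intro j hj
        rw [Multiset.mem_sum] at hj
        obtain ⟨i, hi, hij⟩ := hj
        rwa [Multiset.eq_of_mem_replicate hij]
      · ext i
        simp only [Finsupp.coe_mk]
        simp_rw [Multiset.count_sum', Multiset.count_replicate, Finset.sum_ite_eq']
        split_ifs with h
        · exact Nat.div_mul_cancel (hdvd i h)
        · rw [zero_mul]
          symm
          rw [← Finsupp.notMem_support_iff]
          exact fun hc => h (hsupp hc)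
    · -- weight
      intro p hp
      simp only [mem_filter, mem_univ, true_and] at hp
      rw [Finset.prod_multiset_map_count]
      rw [Finset.prod_subset (fun i => by simp only [Multiset.mem_toFinset]; exact hp i)
        (fun i _ hi => by
          rw [Multiset.count_eq_zero_of_notMem (by simpa using hi), pow_zero])]
      refine Finset.prod_congr rfl fun i hi => ?_
      simp only [Finsupp.coe_mk]
      rw [if_pos (Dvd.intro_left _ rfl), Nat.mul_div_cancel _ (hs i hi)]
  · intro μ hμ hne
    by_contra hnd
    push_neg at hnd
    obtain ⟨i, his, hid⟩ := hnd
    exact hne (Finset.prod_eq_zero his (by rw [if_neg hid]))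

lemma coeff_partGF_eq (f : ℕ → α) (N n : ℕ) (hn : n ≤ N) :
    (PowerSeries.coeff (R := α) n) (partGF f) =
      (PowerSeries.coeff (R := α) n) (∏ i ∈ Finset.Icc 1 N, geomW f i) := by
  rw [coeff_prod_geomW f n _ (fun i hi => (Finset.mem_Icc.mp hi).1)]
  rw [partGF, coeff_mk]
  have hall : ∀ p ∈ (univ : Finset n.Partition), ∀ j ∈ p.parts, j ∈ Finset.Icc 1 N := by
    intro p _ j hj
    rw [Finset.mem_Icc]
    refine ⟨p.parts_pos hj, ?_⟩
    calc j ≤ p.parts.sum := Multiset.le_sum_of_mem hj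
    _ = n := p.parts_sum
    _ ≤ N := hn
  rw [Finset.filter_true_of_mem hall, ← Finset.sum_coe_sort]

lemma coeff_mul_congr_left {A A' B : PowerSeries α} {n : ℕ}
    (h : ∀ i ≤ n, (PowerSeries.coeff (R := α) i) A = (PowerSeries.coeff (R := α) i) A') :
    (PowerSeries.coeff (R := α) n) (A * B) = (PowerSeries.coeff (R := α) n) (A' * B) := by
  simp_rw [PowerSeries.coeff_mul]
  refine Finset.sum_congr rfl fun ij hij => ?_
  rw [h ij.1 (by have := Finset.HasAntidiagonal.mem_antidiagonal.mp hij; omega)]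

/-- the key truncated-inverse property -/
lemma coeff_partGF_mul (f : ℕ → α) (N n : ℕ) (hn : n ≤ N) :
    (PowerSeries.coeff (R := α) n)
      (partGF f * ∏ k ∈ Finset.Icc 1 N, (1 - PowerSeries.C (R := α) (f k) * PowerSeries.X ^ k)) =
      if n = 0 then 1 else 0 := by
  rw [coeff_mul_congr_left (A' := ∏ i ∈ Finset.Icc 1 N, geomW f i)
    (fun i hi => coeff_partGF_eq f N i (le_trans hi hn))]
  rw [← Finset.prod_mul_distrib]
  have : ∀ k ∈ Finset.Icc 1 N,
      geomW f k * (1 - PowerSeries.C (R := α) (f k) * PowerSeries.X ^ k) = 1 := by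
    intro k hk
    rw [mul_comm]
    exact geomW_inv f k (Finset.mem_Icc.mp hk).1
  rw [Finset.prod_congr rfl this, Finset.prod_const_one, PowerSeries.coeff_one]

lemma coeff_mul_of_one {A B : PowerSeries α} {n : ℕ}
    (h : ∀ i ≤ n, (PowerSeries.coeff (R := α) i) A = if i = 0 then 1 else 0) :
    (PowerSeries.coeff (R := α) n) (A * B) = (PowerSeries.coeff (R := α) n) B := by
  rw [coeff_mul_congr_left (A' := 1) (fun i hi => by rw [h i hi, PowerSeries.coeff_one]),
    one_mul]


lemma prod_map_pow {M : Type*} [CommMonoid M] (x : M) (s : Multiset ℕ) (g : ℕ → ℕ) :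
    (s.map (fun j => x ^ g j)).prod = x ^ (s.map g).sum := by
  induction s using Multiset.induction_on with
  | empty => simp
  | cons a s ih => simp [ih, pow_add]

lemma sum_map_sub_one (s : Multiset ℕ) (h : ∀ x ∈ s, 0 < x) :
    (s.map (fun j => j - 1)).sum = s.sum - Multiset.card s := by
  induction s using Multiset.induction_on with
  | empty => simp
  | cons a s ih =>
    have ha := h a (Multiset.mem_cons_self a s)
    have hc : Multiset.card s ≤ s.sum := by
      simpa using Multiset.card_nsmul_le_sum (a := 1) (fun x hx => h x (Multiset.mem_cons_of_mem hx))
    rw [Multiset.map_cons, Multiset.sum_cons, Multiset.sum_cons, Multiset.card_cons,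
      ih (fun x hx => h x (Multiset.mem_cons_of_mem hx))]
    omega

lemma card_le_sum_parts {m : ℕ} (p : m.Partition) : Multiset.card p.parts ≤ m := by
  have := Multiset.card_nsmul_le_sum (s := p.parts) (a := 1) (fun x hx => p.parts_pos hx)
  simpa [p.parts_sum] using this

lemma partCount_eq (m r : ℕ) :
    partCount m r = ((univ : Finset m.Partition).filter
      (fun p => Multiset.card p.parts = r)).card := by
  rw [partCount, Nat.card_eq_fintype_card, Fintype.card_subtype]

lemma sum_a (m : ℕ) :
    (∑ p : m.Partition, (p.parts.map (fun j => (Polynomial.X : Polynomial ℚ) ^ (j - 1))).prod) =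
      ∑ r ∈ Finset.range (m + 1), (partCount m r : Polynomial ℚ) * Polynomial.X ^ (m - r) := by
  have key : ∀ p : m.Partition,
      (p.parts.map (fun j => (Polynomial.X : Polynomial ℚ) ^ (j - 1))).prod =
        Polynomial.X ^ (m - Multiset.card p.parts) := by
    intro p
    rw [prod_map_pow, sum_map_sub_one _ (fun x hx => p.parts_pos hx), p.parts_sum]
  rw [Finset.sum_congr rfl (fun p _ => key p)]
  rw [← Finset.sum_fiberwise_of_maps_to (g := fun p : m.Partition => Multiset.card p.parts)
    (t := Finset.range (m + 1)) (fun p _ => Finset.mem_range.mpr (by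
      have := card_le_sum_parts p; omega))]
  refine Finset.sum_congr rfl fun r _ => ?_
  rw [Finset.sum_congr rfl (fun p hp => by
    rw [(Finset.mem_filter.mp hp).2]), Finset.sum_const, nsmul_eq_mul, partCount_eq]

lemma sum_b (m : ℕ) :
    (∑ p : m.Partition, (p.parts.map (fun j => (Polynomial.X : Polynomial ℚ) ^ (j + 1))).prod) =
      ∑ r ∈ Finset.range (m + 1), (partCount m r : Polynomial ℚ) * Polynomial.X ^ (m + r) := by
  have key : ∀ p : m.Partition,
      (p.parts.map (fun j => (Polynomial.X : Polynomial ℚ) ^ (j + 1))).prod =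
        Polynomial.X ^ (m + Multiset.card p.parts) := by
    intro p
    rw [prod_map_pow]
    congr 1
    rw [Multiset.sum_map_add]
    simp [p.parts_sum]
  rw [Finset.sum_congr rfl (fun p _ => key p)]
  rw [← Finset.sum_fiberwise_of_maps_to (g := fun p : m.Partition => Multiset.card p.parts)
    (t := Finset.range (m + 1)) (fun p _ => Finset.mem_range.mpr (by
      have := card_le_sum_parts p; omega))]
  refine Finset.sum_congr rfl fun r _ => ?_
  rw [Finset.sum_congr rfl (fun p hp => by
    rw [(Finset.mem_filter.mp hp).2]), Finset.sum_const, nsmul_eq_mul, partCount_eq]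

lemma sum_c (m : ℕ) :
    (∑ p : m.Partition, (p.parts.map (fun j => (Polynomial.X : Polynomial ℚ) ^ j)).prod) =
      (partNum m : Polynomial ℚ) * Polynomial.X ^ m := by
  have key : ∀ p : m.Partition,
      (p.parts.map (fun j => (Polynomial.X : Polynomial ℚ) ^ j)).prod = Polynomial.X ^ m := by
    intro p
    rw [prod_map_pow, Multiset.map_id', p.parts_sum]
  rw [Finset.sum_congr rfl (fun p _ => key p), Finset.sum_const, nsmul_eq_mul]
  congr 1
  rw [partNum, Nat.card_eq_fintype_card]
  simp

lemma tuple4_sum {M : Type*} [AddCommMonoid M] (n : ℕ) (F : (Fin 4 → ℕ) → M) :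
    ∑ t ∈ Finset.Nat.antidiagonalTuple 4 n, F t =
      ∑ p ∈ Finset.HasAntidiagonal.antidiagonal n, ∑ q ∈ Finset.HasAntidiagonal.antidiagonal p.2,
        ∑ r ∈ Finset.HasAntidiagonal.antidiagonal q.2, F ![p.1, q.1, r.1, r.2] := by
  rw [Finset.sum_sigma' (Finset.HasAntidiagonal.antidiagonal n)
    (fun p => Finset.HasAntidiagonal.antidiagonal p.2) (fun p q => ∑ r ∈ Finset.HasAntidiagonal.antidiagonal q.2, F ![p.1, q.1, r.1, r.2])]
  rw [Finset.sum_sigma']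
  refine Finset.sum_nbij' (i := fun t => ⟨⟨(t 0, t 1 + (t 2 + t 3)), (t 1, t 2 + t 3)⟩, (t 2, t 3)⟩)
    (j := fun x => ![x.1.1.1, x.1.2.1, x.2.1, x.2.2]) ?_ ?_ ?_ ?_ ?_
  · intro t ht
    rw [Finset.Nat.mem_antidiagonalTuple] at ht
    rw [Fin.sum_univ_four] at ht
    refine Finset.mem_sigma.mpr ⟨Finset.mem_sigma.mpr ⟨?_, ?_⟩, ?_⟩ <;>
      simp only [Finset.HasAntidiagonal.mem_antidiagonal] <;> omega
  · intro x hx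
    simp only [Finset.mem_sigma, Finset.HasAntidiagonal.mem_antidiagonal] at hx
    rw [Finset.Nat.mem_antidiagonalTuple, Fin.sum_univ_four]
    simp [Fin.isValue]
    omega
  · intro t ht
    funext i
    fin_cases i <;> simp
  · intro x hx
    obtain ⟨⟨⟨a, b⟩, ⟨c, d⟩⟩, ⟨e, f⟩⟩ := x
    simp only [Finset.mem_sigma, Finset.HasAntidiagonal.mem_antidiagonal] at hx
    obtain ⟨⟨h1, h2⟩, h3⟩ := hx
    simp only [Matrix.cons_val_zero, Matrix.cons_val_one, Matrix.head_cons,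
      Matrix.cons_val_two, Matrix.cons_val_three]
    simp only [Matrix.vecHead, Matrix.vecTail, Function.comp_apply, Matrix.cons_val_succ, Matrix.cons_val_zero]
    rw [show e + f = d from h3, show c + d = b from h2]
  · intro t ht
    simp only []
    congr 1
    funext i
    fin_cases i <;> rfl

lemma anti_le {n : ℕ} {t : Fin 4 → ℕ} (ht : t ∈ Finset.Nat.antidiagonalTuple 4 n) :
    t 0 + t 1 + t 2 + t 3 = n := by
  rw [Finset.Nat.mem_antidiagonalTuple, Fin.sum_univ_four] at ht
  omega

lemma chi_nested (n : ℕ) :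
    chiP1P1 n = ∑ t ∈ Finset.Nat.antidiagonalTuple 4 n,
      ∑ r₁ ∈ Finset.range (t 0 + 1), ∑ r₄ ∈ Finset.range (t 3 + 1),
        ((partCount (t 0) r₁ * partNum (t 1) * partNum (t 2) * partCount (t 3) r₄ : ℕ) : ℚ) •
          (Polynomial.X : Polynomial ℚ) ^ (n + r₄ - r₁) := by
  rw [chiP1P1]
  simp only [bP1P1, Nat.cast_sum, Finset.sum_smul, Nat.cast_ite, Nat.cast_zero, ite_smul,
    zero_smul]
  rw [Finset.sum_comm]
  refine Finset.sum_congr rfl fun t ht => ?_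
  rw [Finset.sum_comm]
  refine Finset.sum_congr rfl fun r₁ hr₁ => ?_
  rw [Finset.sum_comm]
  refine Finset.sum_congr rfl fun r₄ hr₄ => ?_
  have h0 := anti_le ht
  rw [Finset.mem_range] at hr₁ hr₄
  rw [Finset.sum_eq_single (n + r₄ - r₁)]
  · rw [if_pos (by push_cast; omega)]
  · intro pp hpp hne
    rw [if_neg (fun hc => hne ?_)]
    push_cast at hc
    omega
  · intro h
    exact absurd (Finset.mem_range.mpr (by omega)) h

noncomputable def aQ (m : ℕ) : Polynomial ℚ :=
  ∑ r ∈ Finset.range (m + 1), (partCount m r : Polynomial ℚ) * Polynomial.X ^ (m - r)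
noncomputable def bQ (m : ℕ) : Polynomial ℚ :=
  ∑ r ∈ Finset.range (m + 1), (partCount m r : Polynomial ℚ) * Polynomial.X ^ (m + r)
noncomputable def cQ (m : ℕ) : Polynomial ℚ :=
  (partNum m : Polynomial ℚ) * Polynomial.X ^ m

lemma coeff_G1 (m : ℕ) : (PowerSeries.coeff (R := Polynomial ℚ) m)
    (partGF (fun k => (Polynomial.X : Polynomial ℚ) ^ (k - 1))) = aQ m := by
  rw [partGF, coeff_mk, sum_a, aQ]

lemma coeff_G2 (m : ℕ) : (PowerSeries.coeff (R := Polynomial ℚ) m)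
    (partGF (fun k => (Polynomial.X : Polynomial ℚ) ^ k)) = cQ m := by
  rw [partGF, coeff_mk, sum_c, cQ]

lemma coeff_G3 (m : ℕ) : (PowerSeries.coeff (R := Polynomial ℚ) m)
    (partGF (fun k => (Polynomial.X : Polynomial ℚ) ^ (k + 1))) = bQ m := by
  rw [partGF, coeff_mk, sum_b, bQ]

lemma chi_GF : (PowerSeries.mk fun m => chiP1P1 m) =
    partGF (fun k => (Polynomial.X : Polynomial ℚ) ^ (k - 1)) *
      (partGF (fun k => (Polynomial.X : Polynomial ℚ) ^ k) *
        (partGF (fun k => (Polynomial.X : Polynomial ℚ) ^ k) *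
          partGF (fun k => (Polynomial.X : Polynomial ℚ) ^ (k + 1)))) := by
  refine PowerSeries.ext fun n => ?_
  rw [coeff_mk]
  have rhs : (PowerSeries.coeff (R := Polynomial ℚ) n)
      (partGF (fun k => (Polynomial.X : Polynomial ℚ) ^ (k - 1)) *
        (partGF (fun k => (Polynomial.X : Polynomial ℚ) ^ k) *
          (partGF (fun k => (Polynomial.X : Polynomial ℚ) ^ k) *
            partGF (fun k => (Polynomial.X : Polynomial ℚ) ^ (k + 1))))) =
      ∑ p ∈ Finset.HasAntidiagonal.antidiagonal n, ∑ q ∈ Finset.HasAntidiagonal.antidiagonal p.2,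
        ∑ r ∈ Finset.HasAntidiagonal.antidiagonal q.2, aQ p.1 * (cQ q.1 * (cQ r.1 * bQ r.2)) := by
    rw [PowerSeries.coeff_mul]
    refine Finset.sum_congr rfl fun p hp => ?_
    rw [coeff_G1, PowerSeries.coeff_mul, Finset.mul_sum]
    refine Finset.sum_congr rfl fun q hq => ?_
    rw [coeff_G2, PowerSeries.coeff_mul, Finset.mul_sum, Finset.mul_sum]
    refine Finset.sum_congr rfl fun r hr => ?_
    rw [coeff_G2, coeff_G3]
  rw [rhs, chi_nested, tuple4_sum]
  refine Finset.sum_congr rfl fun p hp => ?_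
  refine Finset.sum_congr rfl fun q hq => ?_
  refine Finset.sum_congr rfl fun r hr => ?_
  rw [Finset.HasAntidiagonal.mem_antidiagonal] at hp hq hr
  have t0 : (![p.1, q.1, r.1, r.2] : Fin 4 → ℕ) 0 = p.1 := rfl
  have t1 : (![p.1, q.1, r.1, r.2] : Fin 4 → ℕ) 1 = q.1 := rfl
  have t2 : (![p.1, q.1, r.1, r.2] : Fin 4 → ℕ) 2 = r.1 := rfl
  have t3 : (![p.1, q.1, r.1, r.2] : Fin 4 → ℕ) 3 = r.2 := rfl
  simp only [t0, t1, t2, t3]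
  rw [aQ, Finset.sum_mul]
  refine Finset.sum_congr rfl fun r1 hr1 => ?_
  rw [Finset.mem_range] at hr1
  rw [bQ, cQ, cQ]
  simp only [Finset.mul_sum]
  refine Finset.sum_congr rfl fun r4 hr4 => ?_
  rw [Finset.mem_range] at hr4
  rw [Polynomial.smul_eq_C_mul, Polynomial.C_eq_natCast]
  rw [show n + r4 - r1 = p.1 - r1 + q.1 + r.1 + (r.2 + r4) from by omega]
  push_cast
  ring

theorem stmt10' (N : ℕ) : ∀ n ≤ N,
    (PowerSeries.coeff (R := Polynomial ℚ) n)
      ((PowerSeries.mk fun m => chiP1P1 m) *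
        ∏ k ∈ Finset.Icc 1 N,
          ((1 - PowerSeries.C (R := Polynomial ℚ) (Polynomial.X ^ (k - 1)) * PowerSeries.X ^ k) *
            (1 - PowerSeries.C (R := Polynomial ℚ) (Polynomial.X ^ k) * PowerSeries.X ^ k) ^ 2 *
            (1 - PowerSeries.C (R := Polynomial ℚ) (Polynomial.X ^ (k + 1)) * PowerSeries.X ^ k))) =
    if n = 0 then 1 else 0 := by
  intro n hn
  rw [chi_GF]
  rw [show (∏ k ∈ Finset.Icc 1 N,
      ((1 - PowerSeries.C (R := Polynomial ℚ) (Polynomial.X ^ (k - 1)) * PowerSeries.X ^ k) *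
        (1 - PowerSeries.C (R := Polynomial ℚ) (Polynomial.X ^ k) * PowerSeries.X ^ k) ^ 2 *
        (1 - PowerSeries.C (R := Polynomial ℚ) (Polynomial.X ^ (k + 1)) * PowerSeries.X ^ k))) =
      (∏ k ∈ Finset.Icc 1 N,
        (1 - PowerSeries.C (R := Polynomial ℚ) (Polynomial.X ^ (k - 1)) * PowerSeries.X ^ k)) *
      ((∏ k ∈ Finset.Icc 1 N,
        (1 - PowerSeries.C (R := Polynomial ℚ) (Polynomial.X ^ k) * PowerSeries.X ^ k)) *
      ((∏ k ∈ Finset.Icc 1 N,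
        (1 - PowerSeries.C (R := Polynomial ℚ) (Polynomial.X ^ k) * PowerSeries.X ^ k)) *
      (∏ k ∈ Finset.Icc 1 N,
        (1 - PowerSeries.C (R := Polynomial ℚ) (Polynomial.X ^ (k + 1)) * PowerSeries.X ^ k)))) from by
    rw [Finset.prod_mul_distrib, Finset.prod_mul_distrib, Finset.prod_pow]
    ring]
  rw [show ∀ G1 G2 G3 P1 P2 P3 : PowerSeries (Polynomial ℚ),
      G1 * (G2 * (G2 * G3)) * (P1 * (P2 * (P2 * P3))) =
      (G1 * P1) * ((G2 * P2) * ((G2 * P2) * (G3 * P3))) from fun _ _ _ _ _ _ => by ring]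
  rw [coeff_mul_of_one (fun i hi =>
    coeff_partGF_mul (fun k => (Polynomial.X : Polynomial ℚ) ^ (k - 1)) N i (le_trans hi hn))]
  rw [coeff_mul_of_one (fun i hi =>
    coeff_partGF_mul (fun k => (Polynomial.X : Polynomial ℚ) ^ k) N i (le_trans hi hn))]
  rw [coeff_mul_of_one (fun i hi =>
    coeff_partGF_mul (fun k => (Polynomial.X : Polynomial ℚ) ^ k) N i (le_trans hi hn))]
  exact coeff_partGF_mul (fun k => (Polynomial.X : Polynomial ℚ) ^ (k + 1)) N n hn

end AuxSec

/-- `∑_{n≥0} χ_n(y) z^n = ∏_{k≥1} (1-y^{k-1}z^k)⁻¹(1-y^kz^k)⁻²(1-y^{k+1}z^k)⁻¹`,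
formulated coefficient-wise: for every `N` and `n ≤ N`, multiplying the left-hand side
by `∏_{k=1}^{N} (1-y^{k-1}z^k)(1-y^kz^k)²(1-y^{k+1}z^k)` gives `z^n`-coefficient `δ_{n,0}`. -/
theorem stmt10 (N : ℕ) : ∀ n ≤ N,
    (PowerSeries.coeff (R := Polynomial ℚ) n)
      ((PowerSeries.mk fun m => chiP1P1 m) *
        ∏ k ∈ Finset.Icc 1 N,
          ((1 - PowerSeries.C (R := Polynomial ℚ) (Polynomial.X ^ (k - 1)) * PowerSeries.X ^ k) *
            (1 - PowerSeries.C (R := Polynomial ℚ) (Polynomial.X ^ k) * PowerSeries.X ^ k) ^ 2 *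
            (1 - PowerSeries.C (R := Polynomial ℚ) (Polynomial.X ^ (k + 1)) * PowerSeries.X ^ k))) =
    if n = 0 then 1 else 0 := by
  exact stmt10' N
end

section
/- For a vector space V over a field k of characteristic 0 with the symmetric group 𝔖_n acting on V^{⊗n} by permutations, the dimension of the space of invariants is C(dim V + n - 1, n) and the dimension of the space of anti-invariants {v : π·v = ε(π)v for all π} is C(dim V, n). -/
open PiTensorProduct
open scoped TensorProduct

/-- The submodule of `𝔖_n`-invariants of `V^{⊗n}`, where `𝔖_n` permutes tensor factors. -/
noncomputable def tensorInvariants (k V : Type*) [Field k] [AddCommGroup V] [Module k V]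
    (n : ℕ) : Submodule k (⨂[k] (i : Fin n), V) :=
  ⨅ σ : Equiv.Perm (Fin n),
    LinearMap.eqLocus
      (PiTensorProduct.reindex k (fun _ : Fin n => V) σ).toLinearMap LinearMap.id

/-- The submodule of `𝔖_n`-anti-invariants `{v : π·v = ε(π)·v for all π}` of `V^{⊗n}`. -/
noncomputable def tensorAntiInvariants (k V : Type*) [Field k] [AddCommGroup V] [Module k V]
    (n : ℕ) : Submodule k (⨂[k] (i : Fin n), V) :=
  ⨅ σ : Equiv.Perm (Fin n),
    LinearMap.eqLocus
      (PiTensorProduct.reindex k (fun _ : Fin n => V) σ).toLinearMap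
      ((((Equiv.Perm.sign σ : ℤ) : k)) • LinearMap.id)

namespace Stmt13Aux

variable {k : Type*} [Field k] {n d : ℕ}

/-- sign of a permutation, as element of `k`. -/
def sgn (k : Type*) [Field k] {n : ℕ} (σ : Equiv.Perm (Fin n)) : k :=
  ((Equiv.Perm.sign σ : ℤ) : k)

lemma sgn_mul_self (σ : Equiv.Perm (Fin n)) : sgn k σ * sgn k σ = 1 := by
  rw [sgn, ← Int.cast_mul, ← Units.val_mul, Int.units_mul_self]
  simp

lemma sgn_mul (σ τ : Equiv.Perm (Fin n)) : sgn k (σ * τ) = sgn k σ * sgn k τ := by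
  rw [sgn, sgn, sgn, _root_.map_mul, ← Int.cast_mul, ← Units.val_mul]

section B
variable {V : Type*} [AddCommGroup V] [Module k V] (b : Module.Basis (Fin d) k V)

/-- basis vector of the tensor power -/
noncomputable def e (f : Fin n → Fin d) : ⨂[k] (_ : Fin n), V := tprod k fun i => b (f i)

/-- from coordinates to tensor -/
noncomputable def S : ((Fin n → Fin d) → k) →ₗ[k] ⨂[k] (_ : Fin n), V :=
  ∑ f : Fin n → Fin d, (LinearMap.proj f).smulRight (e b f)

lemma S_apply (c : (Fin n → Fin d) → k) : S b c = ∑ f : Fin n → Fin d, c f • e b f := by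
  simp [S]

/-- from tensor to coordinates -/
noncomputable def T : (⨂[k] (_ : Fin n), V) →ₗ[k] ((Fin n → Fin d) → k) :=
  LinearMap.pi fun f => lift
    ((MultilinearMap.mkPiAlgebra k (Fin n) k).compLinearMap fun i => b.coord (f i))

lemma T_tprod (v : Fin n → V) (f : Fin n → Fin d) :
    T b (tprod k v) f = ∏ i, b.repr (v i) (f i) := by
  simp [T, Module.Basis.coord]

lemma T_e (g f : Fin n → Fin d) : T b (e b g) f = if f = g then 1 else 0 := by
  rw [e, T_tprod]
  by_cases h : f = g
  · subst h; simp
  · rw [if_neg h]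
    obtain ⟨i, hi⟩ := Function.ne_iff.mp h
    refine Finset.prod_eq_zero (Finset.mem_univ i) ?_
    rw [Module.Basis.repr_self, Finsupp.single_apply, if_neg (fun hh => hi hh.symm)]

lemma expand (v : Fin n → V) :
    tprod k v = ∑ f : Fin n → Fin d, (∏ i, b.repr (v i) (f i)) • e b f := by
  have h1 : v = fun i => ∑ j : Fin d, b.repr (v i) j • b j := by
    funext i; rw [Module.Basis.sum_repr]
  conv_lhs => rw [h1]
  rw [MultilinearMap.map_sum]
  refine Finset.sum_congr rfl fun f _ => ?_
  rw [MultilinearMap.map_smul_univ]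
  rfl

lemma ST : (S (n := n) b).comp (T b) = LinearMap.id := by
  ext v
  simp only [LinearMap.comp_apply, LinearMap.compMultilinearMap_apply, LinearMap.id_apply]
  rw [S_apply]
  conv_rhs => rw [expand b v]
  exact Finset.sum_congr rfl fun f _ => by rw [T_tprod]

lemma TS : (T (n := n) b).comp (S b) = LinearMap.id := by
  refine LinearMap.ext fun c => ?_
  funext f
  simp only [LinearMap.comp_apply, LinearMap.id_apply, S_apply, map_sum, map_smul]
  have : ∀ g : Fin n → Fin d, (c g • T b (e b g)) f = c g * if f = g then 1 else 0 := by
    intro g; rw [Pi.smul_apply, T_e, smul_eq_mul]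
  rw [Finset.sum_apply]
  simp only [this]
  simp [Finset.sum_ite_eq]

/-- the coordinate equivalence -/
noncomputable def E : ((Fin n → Fin d) → k) ≃ₗ[k] ⨂[k] (_ : Fin n), V :=
  LinearEquiv.ofLinear (S b) (T b) (ST b) (TS b)

lemma E_apply (c : (Fin n → Fin d) → k) : E b c = S b c := rfl

/-- precomposition -/
noncomputable def precomp (σ : Equiv.Perm (Fin n)) : ((Fin n → Fin d) → k) →ₗ[k] ((Fin n → Fin d) → k) :=
  LinearMap.funLeft k k (· ∘ σ)

lemma precomp_apply (σ : Equiv.Perm (Fin n)) (c : (Fin n → Fin d) → k) (g : Fin n → Fin d) :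
    precomp σ c g = c (g ∘ σ) := rfl

lemma reindex_e (σ : Equiv.Perm (Fin n)) (f : Fin n → Fin d) :
    PiTensorProduct.reindex k (fun _ : Fin n => V) σ (e b f) = e b (f ∘ σ.symm) := by
  rw [e, reindex_tprod]; rfl

lemma reindex_S (σ : Equiv.Perm (Fin n)) (c : (Fin n → Fin d) → k) :
    PiTensorProduct.reindex k (fun _ : Fin n => V) σ (S b c) = S b (precomp σ c) := by
  rw [S_apply, map_sum, S_apply]
  simp only [map_smul, reindex_e]
  refine Fintype.sum_equiv (Equiv.arrowCongr σ (Equiv.refl (Fin d))) _ _ fun f => ?_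
  have h1 : (Equiv.arrowCongr σ (Equiv.refl (Fin d))) f = f ∘ σ.symm := rfl
  rw [h1, precomp_apply]
  have h2 : (f ∘ ⇑σ.symm) ∘ ⇑σ = f := by funext x; simp
  rw [h2]


lemma mem_inv_iff (x : ⨂[k] (_ : Fin n), V) :
    x ∈ tensorInvariants k V n ↔
      ∀ σ : Equiv.Perm (Fin n), PiTensorProduct.reindex k (fun _ : Fin n => V) σ x = x := by
  simp [tensorInvariants, Submodule.mem_iInf, LinearMap.mem_eqLocus]

lemma mem_anti_iff (x : ⨂[k] (_ : Fin n), V) :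
    x ∈ tensorAntiInvariants k V n ↔
      ∀ σ : Equiv.Perm (Fin n),
        PiTensorProduct.reindex k (fun _ : Fin n => V) σ x = sgn k σ • x := by
  simp [tensorAntiInvariants, Submodule.mem_iInf, LinearMap.mem_eqLocus, sgn]

end B

/-- invariant coordinates -/
noncomputable def A (k : Type*) [Field k] (n d : ℕ) : Submodule k ((Fin n → Fin d) → k) :=
  ⨅ σ : Equiv.Perm (Fin n), LinearMap.eqLocus (precomp σ) LinearMap.id

/-- anti-invariant coordinates -/
noncomputable def Bsub (k : Type*) [Field k] (n d : ℕ) : Submodule k ((Fin n → Fin d) → k) :=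
  ⨅ σ : Equiv.Perm (Fin n), LinearMap.eqLocus (precomp σ) (sgn k σ • LinearMap.id)

lemma mem_A_iff (c : (Fin n → Fin d) → k) :
    c ∈ A k n d ↔ ∀ σ : Equiv.Perm (Fin n), precomp σ c = c := by
  simp [A, Submodule.mem_iInf, LinearMap.mem_eqLocus]

lemma mem_Bsub_iff (c : (Fin n → Fin d) → k) :
    c ∈ Bsub k n d ↔ ∀ σ : Equiv.Perm (Fin n), precomp σ c = sgn k σ • c := by
  simp [Bsub, Submodule.mem_iInf, LinearMap.mem_eqLocus]

section B2
variable {V : Type*} [AddCommGroup V] [Module k V] (b : Module.Basis (Fin d) k V)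

lemma inv_eq_map :
    tensorInvariants k V n = (A k n d).map ((E (n := n) b).toLinearMap) := by
  ext x
  rw [mem_inv_iff, Submodule.mem_map]
  constructor
  · intro hx
    refine ⟨(E b).symm x, ?_, by simp⟩
    rw [mem_A_iff]
    intro σ
    apply (E b).injective
    have hsx : S b ((E b).symm x) = x := (E b).apply_symm_apply x
    show E b (precomp σ ((E b).symm x)) = E b ((E b).symm x)
    rw [E_apply, ← reindex_S, hsx, hx σ, LinearEquiv.apply_symm_apply]
  · rintro ⟨c, hc, rfl⟩
    intro σ
    rw [mem_A_iff] at hc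
    show PiTensorProduct.reindex k (fun _ : Fin n => V) σ (S b c) = S b c
    rw [reindex_S, hc σ]

lemma anti_eq_map :
    tensorAntiInvariants k V n = (Bsub k n d).map ((E (n := n) b).toLinearMap) := by
  ext x
  rw [mem_anti_iff, Submodule.mem_map]
  constructor
  · intro hx
    refine ⟨(E b).symm x, ?_, by simp⟩
    rw [mem_Bsub_iff]
    intro σ
    apply (E b).injective
    have h1 : E b (precomp σ ((E b).symm x)) =
        PiTensorProduct.reindex k (fun _ : Fin n => V) σ x := by
      rw [E_apply, ← reindex_S, ← E_apply, LinearEquiv.apply_symm_apply]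
    rw [h1, hx σ, map_smul, LinearEquiv.apply_symm_apply]
  · rintro ⟨c, hc, rfl⟩
    intro σ
    rw [mem_Bsub_iff] at hc
    show PiTensorProduct.reindex k (fun _ : Fin n => V) σ (S b c) = sgn k σ • S b c
    rw [reindex_S, hc σ, map_smul]

end B2

section SymPart

/-- multiset of values -/
noncomputable def mySym (f : Fin n → Fin d) : Sym (Fin d) n :=
  ⟨(List.ofFn f : Multiset (Fin d)), by simp⟩

lemma mySym_comp (f : Fin n → Fin d) (σ : Equiv.Perm (Fin n)) : mySym (f ∘ σ) = mySym f :=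
  Subtype.ext (Multiset.coe_eq_coe.mpr (σ.ofFn_comp_perm f))

lemma mySym_eq {f g : Fin n → Fin d} (h : mySym f = mySym g) :
    ∃ σ : Equiv.Perm (Fin n), g = f ∘ σ := by
  have hp : (List.ofFn f).Perm (List.ofFn g) :=
    Multiset.coe_eq_coe.mp (congrArg Subtype.val h)
  have h1 : f ∘ Tuple.sort f = g ∘ Tuple.sort g := by
    apply List.ofFn_injective
    refine List.Perm.eq_of_sortedLE (Tuple.monotone_sort f).sortedLE_ofFn
      (Tuple.monotone_sort g).sortedLE_ofFn ?_
    exact ((Tuple.sort f).ofFn_comp_perm f).trans (hp.trans ((Tuple.sort g).ofFn_comp_perm g).symm)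
  refine ⟨(Tuple.sort g).symm.trans (Tuple.sort f), ?_⟩
  funext x
  have h2 := congrFun h1 ((Tuple.sort g).symm x)
  simp only [Function.comp_apply, Equiv.apply_symm_apply] at h2
  simpa [Function.comp] using h2.symm

lemma mySym_surj : Function.Surjective (mySym (n := n) (d := d)) := by
  rintro ⟨m, hm⟩
  obtain ⟨l, rfl⟩ : ∃ l : List (Fin d), (l : Multiset (Fin d)) = m := ⟨m.toList, m.coe_toList⟩
  rw [Multiset.coe_card] at hm
  subst hm
  exact ⟨fun i => l.get i, Subtype.ext (by simp [mySym, List.ofFn_get])⟩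

/-- pullback along mySym -/
noncomputable def Ψ (k : Type*) [Field k] (n d : ℕ) :
    (Sym (Fin d) n → k) →ₗ[k] ((Fin n → Fin d) → k) :=
  LinearMap.funLeft k k mySym

lemma range_Ψ : LinearMap.range (Ψ k n d) = A k n d := by
  ext c
  rw [LinearMap.mem_range, mem_A_iff]
  constructor
  · rintro ⟨a, rfl⟩ σ
    funext g
    rw [precomp_apply]
    show a (mySym (g ∘ σ)) = a (mySym g)
    rw [mySym_comp]
  · intro hc
    refine ⟨c ∘ Function.surjInv (mySym_surj (n := n) (d := d)), ?_⟩
    funext f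
    show c (Function.surjInv mySym_surj (mySym f)) = c f
    have h1 : mySym (Function.surjInv mySym_surj (mySym f)) = mySym f :=
      Function.surjInv_eq mySym_surj _
    obtain ⟨σ, hσ⟩ := mySym_eq h1.symm
    rw [hσ]
    have h2 := congrFun (hc σ) f
    rwa [precomp_apply] at h2

lemma finrank_A : Module.finrank k (A k n d) = (d + n - 1).choose n := by
  have hinj : Function.Injective (Ψ k n d) :=
    LinearMap.funLeft_injective_of_surjective k k _ mySym_surj
  rw [← range_Ψ, LinearMap.finrank_range_of_inj hinj,
    Module.finrank_fintype_fun_eq_card, Sym.card_sym_eq_choose, Fintype.card_fin]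

end SymPart

section FinsetPart

/-- increasing enumeration of an `n`-element subset -/
noncomputable def enum (s : {s : Finset (Fin d) // s.card = n}) : Fin n → Fin d :=
  fun i => s.1.orderEmbOfFin s.2 i

lemma enum_strictMono (s : {s : Finset (Fin d) // s.card = n}) : StrictMono (enum s) :=
  (s.1.orderEmbOfFin s.2).strictMono

lemma image_enum (s : {s : Finset (Fin d) // s.card = n}) :
    Finset.image (enum s) Finset.univ = s.1 := by
  ext x
  simp only [Finset.mem_image, Finset.mem_univ, true_and]
  constructor
  · rintro ⟨i, rfl⟩; exact Finset.orderEmbOfFin_mem _ _ _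
  · intro hx
    have h2 : x ∈ Set.range (s.1.orderEmbOfFin s.2) := by
      rw [Finset.range_orderEmbOfFin]; exact hx
    obtain ⟨i, hi⟩ := h2
    exact ⟨i, hi⟩

/-- the image subset of an injective tuple -/
noncomputable def sf (f : Fin n → Fin d) (h : Function.Injective f) :
    {s : Finset (Fin d) // s.card = n} :=
  ⟨Finset.image f Finset.univ, by
    rw [Finset.card_image_of_injective _ h, Finset.card_univ, Fintype.card_fin]⟩

lemma sf_comp (g : Fin n → Fin d) (σ : Equiv.Perm (Fin n)) (hg : Function.Injective g)
    (hgσ : Function.Injective (g ∘ σ)) : sf (g ∘ σ) hgσ = sf g hg := by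
  apply Subtype.ext
  show Finset.image (g ∘ σ) Finset.univ = Finset.image g Finset.univ
  rw [← Finset.image_image, Finset.image_univ_equiv]

/-- the anti-symmetrization map -/
noncomputable def Θ (k : Type*) [Field k] (n d : ℕ) :
    ({s : Finset (Fin d) // s.card = n} → k) →ₗ[k] ((Fin n → Fin d) → k) where
  toFun a := fun f =>
    if h : Function.Injective f then sgn k (Tuple.sort f) * a (sf f h) else 0
  map_add' a b := by
    funext f
    by_cases h : Function.Injective f <;> simp [h, mul_add]
  map_smul' r a := by
    funext f
    by_cases h : Function.Injective f <;> simp [h] <;> ring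

lemma Θ_apply (a : {s : Finset (Fin d) // s.card = n} → k) (f : Fin n → Fin d) :
    Θ k n d a f =
      if h : Function.Injective f then sgn k (Tuple.sort f) * a (sf f h) else 0 := rfl

lemma sort_comp (g : Fin n → Fin d) (σ : Equiv.Perm (Fin n)) (hg : Function.Injective g) :
    Tuple.sort g = σ * Tuple.sort (g ∘ σ) := by
  have h1 := Tuple.comp_perm_comp_sort_eq_comp_sort (f := g) (σ := σ)
  refine Equiv.ext fun x => ?_
  apply hg
  have h2 := congrFun h1 x
  simp only [Function.comp_apply] at h2
  rw [Equiv.Perm.mul_apply]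
  exact h2.symm

lemma sgn_sort_comp (g : Fin n → Fin d) (σ : Equiv.Perm (Fin n)) (hg : Function.Injective g) :
    sgn k (Tuple.sort (g ∘ σ)) = sgn k σ * sgn k (Tuple.sort g) := by
  have h1 : sgn k (Tuple.sort g) = sgn k σ * sgn k (Tuple.sort (g ∘ σ)) := by
    rw [sort_comp g σ hg, sgn_mul]
  rw [h1, ← mul_assoc, sgn_mul_self, one_mul]

lemma zero_of_not_inj [CharZero k] {c : (Fin n → Fin d) → k} (hc : c ∈ Bsub k n d)
    {f : Fin n → Fin d} (hf : ¬ Function.Injective f) : c f = 0 := by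
  rw [Function.not_injective_iff] at hf
  obtain ⟨i, j, hij, hne⟩ := hf
  have hswap : f ∘ (Equiv.swap i j) = f := by
    funext x
    simp only [Function.comp_apply, Equiv.swap_apply_def]
    split_ifs with h1 h2
    · rw [h1]; exact hij.symm
    · rw [h2]; exact hij
    · rfl
  have h2 := congrFun ((mem_Bsub_iff c).mp hc (Equiv.swap i j)) f
  rw [precomp_apply, hswap, Pi.smul_apply, smul_eq_mul, sgn,
    Equiv.Perm.sign_swap hne] at h2
  have h3 : c f + c f = 0 := by nth_rewrite 1 [h2]; push_cast; ring
  exact add_self_eq_zero.mp h3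

lemma range_Θ [CharZero k] : LinearMap.range (Θ k n d) = Bsub k n d := by
  ext c
  rw [LinearMap.mem_range, mem_Bsub_iff]
  constructor
  · rintro ⟨a, rfl⟩ σ
    funext g
    rw [precomp_apply, Pi.smul_apply, smul_eq_mul, Θ_apply, Θ_apply]
    by_cases hg : Function.Injective g
    · have hgσ : Function.Injective (g ∘ σ) := hg.comp σ.injective
      rw [dif_pos hgσ, dif_pos hg, sf_comp g σ hg hgσ, sgn_sort_comp g σ hg]
      ring
    · have hgσ : ¬ Function.Injective (g ∘ σ) := by
        intro hcon
        have : g = (g ∘ σ) ∘ σ.symm := by funext x; simp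
        rw [this] at hg
        exact hg (hcon.comp σ.symm.injective)
      rw [dif_neg hgσ, dif_neg hg, mul_zero]
  · intro hc
    refine ⟨fun s => c (enum s), ?_⟩
    funext f
    rw [Θ_apply]
    by_cases hf : Function.Injective f
    · rw [dif_pos hf]
      have hmono : StrictMono (f ∘ Tuple.sort f) :=
        (Tuple.monotone_sort f).strictMono_of_injective (hf.comp (Tuple.sort f).injective)
      have henum : enum (sf f hf) = f ∘ Tuple.sort f := by
        have := Finset.orderEmbOfFin_unique (sf f hf).2
          (f := f ∘ Tuple.sort f)
          (fun x => Finset.mem_image.mpr ⟨Tuple.sort f x, Finset.mem_univ _, rfl⟩) hmono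
        funext i
        exact (congrFun this i).symm
      rw [henum]
      have h2 := congrFun (hc (Tuple.sort f)) f
      rw [precomp_apply, Pi.smul_apply, smul_eq_mul] at h2
      rw [h2, ← mul_assoc, sgn_mul_self, one_mul]
    · rw [dif_neg hf]
      exact (zero_of_not_inj ((mem_Bsub_iff c).mpr hc) hf).symm

lemma Θ_injective : Function.Injective (Θ k n d) := by
  rw [injective_iff_map_eq_zero]
  intro a ha
  funext s
  have h1 := congrFun ha (enum s)
  rw [Θ_apply, dif_pos (enum_strictMono s).injective] at h1
  have hsort : Tuple.sort (enum s) = Equiv.refl (Fin n) :=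
    Tuple.sort_eq_refl_iff_monotone.mpr (enum_strictMono s).monotone
  have hsf : sf (enum s) (enum_strictMono s).injective = s :=
    Subtype.ext (image_enum s)
  rw [hsort, hsf] at h1
  simpa [sgn] using h1

lemma finrank_Bsub [CharZero k] : Module.finrank k (Bsub k n d) = d.choose n := by
  rw [← range_Θ, LinearMap.finrank_range_of_inj (Θ_injective (k := k) (n := n) (d := d)),
    Module.finrank_fintype_fun_eq_card, Fintype.card_finset_len, Fintype.card_fin]

end FinsetPart

end Stmt13Aux

/-- For a finite-dimensional vector space `V` over a field of characteristic zero and the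
permutation action of `𝔖_n` on `V^{⊗n}`, the space of invariants has dimension
`C(dim V + n - 1, n)` and the space of anti-invariants has dimension `C(dim V, n)`. -/
theorem stmt13 (k V : Type*) [Field k] [CharZero k] [AddCommGroup V] [Module k V]
    [FiniteDimensional k V] (n : ℕ) :
    Module.finrank k (tensorInvariants k V n) =
        (Module.finrank k V + n - 1).choose n ∧
      Module.finrank k (tensorAntiInvariants k V n) =
        (Module.finrank k V).choose n := by
  classical
  let b : Module.Basis (Fin (Module.finrank k V)) k V := Module.finBasis k V
  constructor
  · rw [Stmt13Aux.inv_eq_map b, LinearEquiv.finrank_map_eq, Stmt13Aux.finrank_A]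
  · rw [Stmt13Aux.anti_eq_map b, LinearEquiv.finrank_map_eq, Stmt13Aux.finrank_Bsub]
end

section
/- For nonnegative integers k, n, a: the number of ways to choose n points from k equally spaced points on a line such that any two chosen points have distance greater than a is C(k - a(n-1), n), and the number of such choices from k equally spaced points on a circle is (k/(k-an))·C(k-an, n) (when k > an). -/
open Finset

/-- Circular distance between residues `i, j` modulo `k` (for `k > 0`). -/
def circDist (k : ℕ) [NeZero k] (i j : ZMod k) : ℕ :=
  min (Nat.dist i.val j.val) (k - Nat.dist i.val j.val)

lemma circDist_eq {k : ℕ} [NeZero k] (i j : ZMod k) :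
    circDist k i j = min (i - j).val (j - i).val := by
  rcases eq_or_ne i j with rfl | hne
  · simp [circDist, Nat.dist_self]
  have hk : 0 < k := Nat.pos_of_ne_zero (NeZero.ne k)
  have hvne : i.val ≠ j.val := fun h => hne (ZMod.val_injective k h)
  have hvi := ZMod.val_lt i
  have hvj := ZMod.val_lt j
  rcases Ne.lt_or_gt hvne with h | h
  · have h1 : (j - i).val = j.val - i.val := ZMod.val_sub (le_of_lt h)
    have h2 : (i - j).val = k - (j.val - i.val) := by
      rw [show i - j = -(j - i) by ring, ZMod.neg_val, if_neg (sub_ne_zero.mpr hne.symm), h1]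
    rw [h1, h2, circDist, Nat.dist_eq_sub_of_le (le_of_lt h)]
    omega
  · have h1 : (i - j).val = i.val - j.val := ZMod.val_sub (le_of_lt h)
    have h2 : (j - i).val = k - (i.val - j.val) := by
      rw [show j - i = -(i - j) by ring, ZMod.neg_val, if_neg (sub_ne_zero.mpr hne), h1]
    rw [h1, h2, circDist, Nat.dist_eq_sub_of_le_right (le_of_lt h)]

lemma circDist_translate {k : ℕ} [NeZero k] (p i j : ZMod k) :
    circDist k (i - p) (j - p) = circDist k i j := by
  rw [circDist_eq, circDist_eq, show i - p - (j - p) = i - j by ring,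
    show j - p - (i - p) = j - i by ring]


lemma telescope {nn b : ℕ} {f : Fin nn → ℕ}
    (h : ∀ i j : Fin nn, i < j → f i + b + 1 ≤ f j) :
    ∀ (d : ℕ) (i j : Fin nn), i.val + d = j.val → f i + (b + 1) * d ≤ f j := by
  intro d
  induction d with
  | zero =>
    intro i j hij
    have : i = j := Fin.ext (by omega)
    subst this; simp
  | succ d ih =>
    intro i j hij
    have hj' : i.val + d < nn := by omega
    have h1 := ih i ⟨i.val + d, hj'⟩ rfl
    have h2 : f ⟨i.val + d, hj'⟩ + b + 1 ≤ f j := h _ j (by simp [Fin.lt_def]; omega)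
    have : (b+1)*(d+1) = (b+1)*d + (b+1) := by ring
    omega

lemma consec {m n a : ℕ} {s : Finset (Fin m)} (hs : s.card = n)
    (hgap : ∀ i ∈ s, ∀ j ∈ s, i ≠ j → a < Nat.dist i.val j.val) :
    ∀ i j : Fin n, i < j →
      (s.orderEmbOfFin hs i).val + a + 1 ≤ (s.orderEmbOfFin hs j).val := by
  intro i j hij
  have hlt : s.orderEmbOfFin hs i < s.orderEmbOfFin hs j :=
    (s.orderEmbOfFin hs).strictMono hij
  have hlt' : (s.orderEmbOfFin hs i).val < (s.orderEmbOfFin hs j).val := hlt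
  have := hgap _ (s.orderEmbOfFin_mem hs i) _ (s.orderEmbOfFin_mem hs j) (ne_of_lt hlt)
  rw [Nat.dist_eq_sub_of_le (le_of_lt hlt')] at this
  omega

lemma fwd_lt {m n a : ℕ} {s : Finset (Fin m)} (hs : s.card = n)
    (hgap : ∀ i ∈ s, ∀ j ∈ s, i ≠ j → a < Nat.dist i.val j.val) (i : Fin n) :
    (s.orderEmbOfFin hs i).val - a * i.val < m - a * (n - 1) := by
  have hpos := i.pos
  have hlast : n - 1 < n := by omega
  have h1 := telescope (consec hs hgap) (n - 1 - i.val) i ⟨n-1, hlast⟩ (by simp; omega)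
  have h3 := telescope (consec hs hgap) (n - 1) ⟨0, by omega⟩ ⟨n-1, hlast⟩ (by simp)
  have h2 : (s.orderEmbOfFin hs ⟨n-1, hlast⟩).val < m := (s.orderEmbOfFin hs ⟨n-1, hlast⟩).isLt
  have e1 : a * (n-1) = a * i.val + a * (n-1-i.val) := by
    rw [← Nat.mul_add]; congr 1; omega
  have e2 : (a+1) * (n-1-i.val) = a * (n-1-i.val) + (n-1-i.val) := by ring
  have e3 : (a+1) * (n-1) = a * (n-1) + (n-1) := by ring
  omega

lemma fwd_ge {m n a : ℕ} {s : Finset (Fin m)} (hs : s.card = n)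
    (hgap : ∀ i ∈ s, ∀ j ∈ s, i ≠ j → a < Nat.dist i.val j.val) (i : Fin n) :
    a * i.val + i.val ≤ (s.orderEmbOfFin hs i).val := by
  have hpos := i.pos
  have h := telescope (consec hs hgap) i.val ⟨0, by omega⟩ i (by simp)
  have e : (a+1) * i.val = a * i.val + i.val := by ring
  omega

lemma fwd_mono {m n a : ℕ} {s : Finset (Fin m)} (hs : s.card = n)
    (hgap : ∀ i ∈ s, ∀ j ∈ s, i ≠ j → a < Nat.dist i.val j.val) {i j : Fin n} (hij : i < j) :
    (s.orderEmbOfFin hs i).val - a * i.val < (s.orderEmbOfFin hs j).val - a * j.val := by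
  have h1 := telescope (consec hs hgap) (j.val - i.val) i j (by omega)
  have h0 := fwd_ge hs hgap i
  have e1 : a * j.val = a * i.val + a * (j.val - i.val) := by
    rw [← Nat.mul_add]; congr 1; omega
  have e2 : (a+1) * (j.val - i.val) = a * (j.val - i.val) + (j.val - i.val) := by ring
  have : i.val < j.val := hij
  omega

lemma bwd_lt {m' n a m : ℕ} (hm : m' = m - a * (n-1)) {t : Finset (Fin m')} (ht : t.card = n)
    (i : Fin n) : (t.orderEmbOfFin ht i).val + a * i.val < m := by
  have hpos := i.pos
  have hlast : n - 1 < n := by omega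
  have htel : ∀ i j : Fin n, i < j →
      (t.orderEmbOfFin ht i).val + 0 + 1 ≤ (t.orderEmbOfFin ht j).val := by
    intro i j hij
    have : (t.orderEmbOfFin ht i).val < (t.orderEmbOfFin ht j).val :=
      (t.orderEmbOfFin ht).strictMono hij
    omega
  have h1 := telescope (f := fun i => (t.orderEmbOfFin ht i).val) (b := 0) htel (n - 1 - i.val) i ⟨n-1, hlast⟩ (by simp; omega)
  beta_reduce at h1
  have h2 : (t.orderEmbOfFin ht ⟨n-1, hlast⟩).val < m - a * (n-1) := hm ▸ (t.orderEmbOfFin ht ⟨n-1, hlast⟩).isLt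
  have e1 : a * (n-1) = a * i.val + a * (n-1-i.val) := by
    rw [← Nat.mul_add]; congr 1; omega
  omega

lemma orderEmbOfFin_image {α : Type*} [DecidableEq α] [LinearOrder α] {n : ℕ} (g : Fin n → α)
    (hg : StrictMono g) (h : (Finset.image g univ).card = n) (i : Fin n) :
    (Finset.image g univ).orderEmbOfFin h i = g i :=
  (congrFun (Finset.orderEmbOfFin_unique h (fun x => mem_image_of_mem _ (mem_univ x)) hg) i).symm

lemma image_orderEmbOfFin {α : Type*} [DecidableEq α] [LinearOrder α] {n : ℕ} {s : Finset α}
    (hs : s.card = n) : Finset.image (fun i => s.orderEmbOfFin hs i) univ = s := by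
  apply Finset.eq_of_subset_of_card_le
  · intro x hx
    rcases mem_image.mp hx with ⟨i, _, rfl⟩
    exact s.orderEmbOfFin_mem hs i
  · rw [hs, Finset.card_image_of_injective _ (s.orderEmbOfFin hs).injective,
      card_univ, Fintype.card_fin]


lemma bwd_card {m n a : ℕ} {t : Finset (Fin (m - a * (n-1)))} (ht : t.card = n) :
    (Finset.univ.image fun i : Fin n =>
      (⟨(t.orderEmbOfFin ht i).val + a * i.val, bwd_lt rfl ht i⟩ : Fin m)).card = n := by
  rw [Finset.card_image_of_injective, card_univ, Fintype.card_fin]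
  intro i j hij
  simp only [Fin.mk.injEq] at hij
  by_contra hne
  rcases Ne.lt_or_gt hne with h | h
  · have h1 : (t.orderEmbOfFin ht i).val < (t.orderEmbOfFin ht j).val :=
      (t.orderEmbOfFin ht).strictMono h
    have h2 : a * i.val ≤ a * j.val := Nat.mul_le_mul_left a (le_of_lt h)
    omega
  · have h1 : (t.orderEmbOfFin ht j).val < (t.orderEmbOfFin ht i).val :=
      (t.orderEmbOfFin ht).strictMono h
    have h2 : a * j.val ≤ a * i.val := Nat.mul_le_mul_left a (le_of_lt h)
    omega

lemma bwd_gap {m n a : ℕ} {t : Finset (Fin (m - a * (n-1)))} (ht : t.card = n) :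
    ∀ x ∈ (Finset.univ.image fun i : Fin n =>
      (⟨(t.orderEmbOfFin ht i).val + a * i.val, bwd_lt rfl ht i⟩ : Fin m)),
    ∀ y ∈ (Finset.univ.image fun i : Fin n =>
      (⟨(t.orderEmbOfFin ht i).val + a * i.val, bwd_lt rfl ht i⟩ : Fin m)),
      x ≠ y → a < Nat.dist x.val y.val := by
  have htel : ∀ i j : Fin n, i < j →
      (t.orderEmbOfFin ht i).val + 0 + 1 ≤ (t.orderEmbOfFin ht j).val := by
    intro i j hij
    have : (t.orderEmbOfFin ht i).val < (t.orderEmbOfFin ht j).val :=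
      (t.orderEmbOfFin ht).strictMono hij
    omega
  have hkey : ∀ i j : Fin n, i < j →
      (t.orderEmbOfFin ht i).val + a * i.val + a + 1 ≤
        (t.orderEmbOfFin ht j).val + a * j.val := by
    intro i j hij
    have h1 := telescope (f := fun i => (t.orderEmbOfFin ht i).val) (b := 0) htel
      (j.val - i.val) i j (by omega)
    beta_reduce at h1
    have hd : 1 ≤ j.val - i.val := by have : i.val < j.val := hij; omega
    have h2 : a * 1 ≤ a * (j.val - i.val) := Nat.mul_le_mul_left a hd
    have e1 : a * j.val = a * i.val + a * (j.val - i.val) := by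
      rw [← Nat.mul_add]; congr 1; omega
    omega
  intro x hx y hy hxy
  rcases mem_image.mp hx with ⟨i, -, rfl⟩
  rcases mem_image.mp hy with ⟨j, -, rfl⟩
  have hij : i ≠ j := by rintro rfl; exact hxy rfl
  rcases Ne.lt_or_gt hij with h | h
  · have := hkey i j h
    rw [Nat.dist_eq_sub_of_le (by simp only [Fin.val_mk]; omega)]
    simp only [Fin.val_mk] at *
    omega
  · have := hkey j i h
    rw [Nat.dist_eq_sub_of_le_right (by simp only [Fin.val_mk]; omega)]
    simp only [Fin.val_mk] at *
    omega

lemma lineCount (m n a : ℕ) :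
    ((Finset.univ.filter fun s : Finset (Fin m) =>
        s.card = n ∧ ∀ i ∈ s, ∀ j ∈ s, i ≠ j → a < Nat.dist i.val j.val).card =
      (m - a * (n - 1)).choose n) := by
  have hrhs : (m - a*(n-1)).choose n
      = (Finset.powersetCard n (univ : Finset (Fin (m - a*(n-1))))).card := by
    rw [Finset.card_powersetCard, Finset.card_univ, Fintype.card_fin]
  rw [hrhs]
  apply Finset.card_bij'
    (i := fun s hs => Finset.univ.image fun i : Fin n =>
      (⟨(s.orderEmbOfFin (Finset.mem_filter.mp hs).2.1 i).val - a * i.val,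
        fwd_lt (Finset.mem_filter.mp hs).2.1 (Finset.mem_filter.mp hs).2.2 i⟩ :
        Fin (m - a * (n-1))))
    (j := fun t ht => Finset.univ.image fun i : Fin n =>
      (⟨(t.orderEmbOfFin (Finset.mem_powersetCard_univ.mp ht) i).val + a * i.val,
        bwd_lt rfl (Finset.mem_powersetCard_univ.mp ht) i⟩ : Fin m))
  case hi =>
    intro s hs
    obtain ⟨-, hcard, hgap⟩ := Finset.mem_filter.mp hs
    rw [Finset.mem_powersetCard_univ]
    rw [Finset.card_image_of_injective, card_univ, Fintype.card_fin]
    intro i j hij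
    simp only [Fin.mk.injEq] at hij
    by_contra hne
    rcases Ne.lt_or_gt hne with h | h
    · exact absurd hij (Nat.ne_of_lt (fwd_mono hcard hgap h))
    · exact absurd hij.symm (Nat.ne_of_lt (fwd_mono hcard hgap h))
  case hj =>
    intro t ht
    have hcard := Finset.mem_powersetCard_univ.mp ht
    show (Finset.univ.image fun i : Fin n =>
      (⟨(t.orderEmbOfFin hcard i).val + a * i.val,
        bwd_lt rfl hcard i⟩ : Fin m)) ∈ _
    rw [Finset.mem_filter]
    exact ⟨mem_univ _, bwd_card hcard, bwd_gap hcard⟩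
  case left_inv =>
    intro s hs
    obtain ⟨-, hcard, hgap⟩ := Finset.mem_filter.mp hs
    set g : Fin n → Fin (m - a*(n-1)) := fun i =>
      ⟨(s.orderEmbOfFin hcard i).val - a * i.val, fwd_lt hcard hgap i⟩ with hg
    have hgm : StrictMono g := fun i j hij => fwd_mono hcard hgap hij
    have himg : ∀ (h' : (Finset.image g univ).card = n) (i : Fin n),
        (Finset.image g univ).orderEmbOfFin h' i = g i :=
      fun h' i => orderEmbOfFin_image g hgm h' i
    have : ∀ (h' : (Finset.image g univ).card = n),
        (Finset.univ.image fun i : Fin n =>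
          (⟨((Finset.image g univ).orderEmbOfFin h' i).val + a * i.val,
            bwd_lt rfl h' i⟩ : Fin m)) = s := by
      intro h'
      have heq : ∀ i : Fin n,
          (⟨((Finset.image g univ).orderEmbOfFin h' i).val + a * i.val,
            bwd_lt rfl h' i⟩ : Fin m) = s.orderEmbOfFin hcard i := by
        intro i
        apply Fin.ext
        have := fwd_ge hcard hgap i
        simp only [himg h', Fin.val_mk]
        simp only [hg, Fin.val_mk]
        omega
      calc (Finset.univ.image fun i : Fin n =>
          (⟨((Finset.image g univ).orderEmbOfFin h' i).val + a * i.val,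
            bwd_lt rfl h' i⟩ : Fin m))
          = Finset.univ.image (fun i => s.orderEmbOfFin hcard i) :=
            Finset.image_congr (fun i _ => heq i)
        _ = s := image_orderEmbOfFin hcard
    exact this _
  case right_inv =>
    intro t ht
    have hcard := Finset.mem_powersetCard_univ.mp ht
    set g : Fin n → Fin m := fun i =>
      ⟨(t.orderEmbOfFin hcard i).val + a * i.val, bwd_lt rfl hcard i⟩ with hg
    have hgm : StrictMono g := by
      intro i j hij
      have h1 : (t.orderEmbOfFin hcard i).val < (t.orderEmbOfFin hcard j).val :=
        (t.orderEmbOfFin hcard).strictMono hij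
      have h2 : a * i.val ≤ a * j.val := Nat.mul_le_mul_left a (le_of_lt hij)
      simp only [Fin.lt_def, hg, Fin.val_mk]
      omega
    have himg : ∀ (h' : (Finset.image g univ).card = n) (i : Fin n),
        (Finset.image g univ).orderEmbOfFin h' i = g i :=
      fun h' i => orderEmbOfFin_image g hgm h' i
    have : ∀ (h' : (Finset.image g univ).card = n)
        (hgap' : ∀ i ∈ Finset.image g univ, ∀ j ∈ Finset.image g univ,
          i ≠ j → a < Nat.dist i.val j.val),
        (Finset.univ.image fun i : Fin n =>
          (⟨((Finset.image g univ).orderEmbOfFin h' i).val - a * i.val,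
            fwd_lt h' hgap' i⟩ : Fin (m - a*(n-1)))) = t := by
      intro h' hgap'
      have heq : ∀ i : Fin n,
          (⟨((Finset.image g univ).orderEmbOfFin h' i).val - a * i.val,
            fwd_lt h' hgap' i⟩ : Fin (m - a*(n-1))) = t.orderEmbOfFin hcard i := by
        intro i
        apply Fin.ext
        simp only [himg h', Fin.val_mk]
        simp only [hg, Fin.val_mk]
        omega
      calc (Finset.univ.image fun i : Fin n =>
          (⟨((Finset.image g univ).orderEmbOfFin h' i).val - a * i.val,
            fwd_lt h' hgap' i⟩ : Fin (m - a*(n-1))))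
          = Finset.univ.image (fun i => t.orderEmbOfFin hcard i) :=
            Finset.image_congr (fun i _ => heq i)
        _ = t := image_orderEmbOfFin hcard
    exact this (bwd_card hcard) (bwd_gap hcard)

lemma dist_def (u v : ℕ) : Nat.dist u v = u - v + (v - u) := rfl

lemma mem_val_bounds {k a : ℕ} [NeZero k] {s : Finset (ZMod k)}
    (hgap : ∀ i ∈ s, ∀ j ∈ s, i ≠ j → a < circDist k i j) (h0 : (0 : ZMod k) ∈ s)
    {x : ZMod k} (hx : x ∈ s) (hx0 : x ≠ 0) : a < x.val ∧ x.val + a < k := by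
  have h := hgap x hx 0 h0 hx0
  have hv := ZMod.val_lt x
  rw [circDist, ZMod.val_zero, Nat.dist_zero_right] at h
  omega

lemma cast_val {k a : ℕ} [NeZero k] (y : Fin (k - (2*a+1))) :
    ((y.val + (a+1) : ℕ) : ZMod k).val = y.val + (a+1) :=
  ZMod.val_cast_of_lt (by have := y.isLt; omega)

set_option maxHeartbeats 1000000 in
lemma zeroCount {k n a : ℕ} [NeZero k] (hn : 0 < n) :
    ((Finset.univ.filter fun s : Finset (ZMod k) =>
        (s.card = n ∧ ∀ i ∈ s, ∀ j ∈ s, i ≠ j → a < circDist k i j) ∧ (0 : ZMod k) ∈ s).card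
      = ((k - (2*a+1)) - a * (n - 1 - 1)).choose (n-1)) := by
  rw [← lineCount (k - (2*a+1)) (n-1) a]
  apply Finset.card_bij'
    (i := fun s hs => (s.erase 0).attach.image fun x =>
      (⟨(x.1).val - (a+1), by
        have h := Finset.mem_filter.mp hs
        have hb := mem_val_bounds h.2.1.2 h.2.2 (Finset.mem_of_mem_erase x.2)
          (Finset.ne_of_mem_erase x.2)
        omega⟩ : Fin (k - (2*a+1))))
    (j := fun t ht => insert (0 : ZMod k)
      (t.image fun y => ((y.val + (a+1) : ℕ) : ZMod k)))
  case hi =>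
    intro s hs
    obtain ⟨-, ⟨hcard, hgap⟩, h0⟩ := Finset.mem_filter.mp hs
    rw [Finset.mem_filter]
    refine ⟨mem_univ _, ?_, ?_⟩
    · rw [Finset.card_image_of_injective, Finset.card_attach,
        Finset.card_erase_of_mem h0, hcard]
      intro x y hxy
      simp only [Fin.mk.injEq] at hxy
      have hbx := mem_val_bounds hgap h0 (Finset.mem_of_mem_erase x.2) (Finset.ne_of_mem_erase x.2)
      have hby := mem_val_bounds hgap h0 (Finset.mem_of_mem_erase y.2) (Finset.ne_of_mem_erase y.2)
      have : x.1.val = y.1.val := by omega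
      exact Subtype.ext (ZMod.val_injective k this)
    · intro u hu v hv huv
      rcases mem_image.mp hu with ⟨x, -, rfl⟩
      rcases mem_image.mp hv with ⟨y, -, rfl⟩
      have hbx := mem_val_bounds hgap h0 (Finset.mem_of_mem_erase x.2) (Finset.ne_of_mem_erase x.2)
      have hby := mem_val_bounds hgap h0 (Finset.mem_of_mem_erase y.2) (Finset.ne_of_mem_erase y.2)
      have hvne : x.1.val ≠ y.1.val := by
        intro h
        exact huv (by apply Fin.ext; simp only [Fin.val_mk]; omega)
      have hne : x.1 ≠ y.1 := fun h => hvne (by rw [h])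
      have hg := hgap x.1 (Finset.mem_of_mem_erase x.2) y.1 (Finset.mem_of_mem_erase y.2) hne
      rw [circDist, dist_def] at hg
      simp only [Fin.val_mk, dist_def]
      omega
  case hj =>
    intro t ht
    obtain ⟨-, tcard, tgap⟩ := Finset.mem_filter.mp ht
    have h0notin : (0 : ZMod k) ∉ t.image fun y => ((y.val + (a+1) : ℕ) : ZMod k) := by
      intro hmem
      rcases mem_image.mp hmem with ⟨y, -, hy⟩
      have := cast_val (k := k) y
      rw [hy, ZMod.val_zero] at this
      omega
    have hinj : Function.Injective fun y : Fin (k - (2*a+1)) => ((y.val + (a+1) : ℕ) : ZMod k) := by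
      intro y1 y2 h
      have h1 := cast_val (k := k) y1
      have h2 := cast_val (k := k) y2
      beta_reduce at h
      rw [h] at h1
      apply Fin.ext
      omega
    rw [Finset.mem_filter]
    refine ⟨mem_univ _, ⟨?_, ?_⟩, Finset.mem_insert_self _ _⟩
    · rw [Finset.card_insert_of_notMem h0notin, Finset.card_image_of_injective _ hinj, tcard]
      omega
    · intro u hu v hv huv
      rcases Finset.mem_insert.mp hu with rfl | hu'
      · rcases Finset.mem_insert.mp hv with rfl | hv'
        · exact absurd rfl huv
        · rcases mem_image.mp hv' with ⟨y, -, rfl⟩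
          have hy := cast_val (k := k) y
          have hylt := y.isLt
          rw [circDist, ZMod.val_zero, Nat.dist_zero_left, hy]
          omega
      · rcases Finset.mem_insert.mp hv with rfl | hv'
        · rcases mem_image.mp hu' with ⟨y, -, rfl⟩
          have hy := cast_val (k := k) y
          have hylt := y.isLt
          rw [circDist, ZMod.val_zero, Nat.dist_zero_right, hy]
          omega
        · rcases mem_image.mp hu' with ⟨y1, hy1m, rfl⟩
          rcases mem_image.mp hv' with ⟨y2, hy2m, rfl⟩
          have h1 := cast_val (k := k) y1
          have h2 := cast_val (k := k) y2
          have hl1 := y1.isLt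
          have hl2 := y2.isLt
          have hne : y1 ≠ y2 := fun h => huv (by rw [h])
          have hg := tgap y1 hy1m y2 hy2m hne
          rw [dist_def] at hg
          rw [circDist, dist_def, h1, h2]
          omega
  case left_inv =>
    intro s hs
    obtain ⟨-, ⟨hcard, hgap⟩, h0⟩ := Finset.mem_filter.mp hs
    symm
    apply Finset.eq_of_subset_of_card_le
    · intro x hx
      rcases eq_or_ne x 0 with rfl | hx0
      · exact Finset.mem_insert_self _ _
      have hb := mem_val_bounds hgap h0 hx hx0
      have hxe : x ∈ s.erase 0 := Finset.mem_erase.mpr ⟨hx0, hx⟩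
      apply Finset.mem_insert_of_mem
      refine Finset.mem_image.mpr ⟨_, Finset.mem_image_of_mem _ (Finset.mem_attach _ ⟨x, hxe⟩), ?_⟩
      show (((x.val - (a+1)) + (a+1) : ℕ) : ZMod k) = x
      rw [show x.val - (a+1) + (a+1) = x.val by omega]
      exact ZMod.natCast_rightInverse x
    · refine le_trans (Finset.card_insert_le _ _) ?_
      refine le_trans (Nat.add_le_add_right Finset.card_image_le 1) ?_
      refine le_trans (Nat.add_le_add_right Finset.card_image_le 1) ?_
      rw [Finset.card_attach, Finset.card_erase_of_mem h0, hcard]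
      omega
  case right_inv =>
    intro t ht
    obtain ⟨-, tcard, tgap⟩ := Finset.mem_filter.mp ht
    have h0notin : (0 : ZMod k) ∉ t.image fun y => ((y.val + (a+1) : ℕ) : ZMod k) := by
      intro hmem
      rcases mem_image.mp hmem with ⟨y, -, hy⟩
      have := cast_val (k := k) y
      rw [hy, ZMod.val_zero] at this
      omega
    symm
    apply Finset.eq_of_subset_of_card_le
    · intro y hy
      have hGy : ((y.val + (a+1) : ℕ) : ZMod k) ∈
          (insert (0 : ZMod k) (t.image fun y => ((y.val + (a+1) : ℕ) : ZMod k))).erase 0 := by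
        refine Finset.mem_erase.mpr ⟨?_, Finset.mem_insert_of_mem (Finset.mem_image_of_mem _ hy)⟩
        intro h
        have := cast_val (k := k) y
        rw [h, ZMod.val_zero] at this
        omega
      refine Finset.mem_image.mpr ⟨⟨_, hGy⟩, Finset.mem_attach _ _, ?_⟩
      apply Fin.ext
      show ((y.val + (a+1) : ℕ) : ZMod k).val - (a+1) = y.val
      rw [cast_val]
      omega
    · refine le_trans Finset.card_image_le ?_
      rw [Finset.card_attach, Finset.erase_insert h0notin]
      exact Finset.card_image_le

lemma transCount {k n a : ℕ} [NeZero k] (p : ZMod k) :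
    ((Finset.univ.filter fun s : Finset (ZMod k) =>
        (s.card = n ∧ ∀ i ∈ s, ∀ j ∈ s, i ≠ j → a < circDist k i j) ∧ p ∈ s).card
      = (Finset.univ.filter fun s : Finset (ZMod k) =>
        (s.card = n ∧ ∀ i ∈ s, ∀ j ∈ s, i ≠ j → a < circDist k i j) ∧ (0 : ZMod k) ∈ s).card) := by
  have hsubinj : Function.Injective (fun x : ZMod k => x - p) := by
    intro x y h
    simpa using congrArg (· + p) h
  have haddinj : Function.Injective (fun x : ZMod k => x + p) := by
    intro x y h
    simpa using congrArg (· - p) h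
  apply Finset.card_nbij' (i := fun s => s.image (fun x => x - p))
    (j := fun s => s.image (fun x => x + p))
  · intro s hs
    obtain ⟨-, ⟨hcard, hgap⟩, hp⟩ := Finset.mem_filter.mp hs
    beta_reduce
    rw [Finset.mem_coe, Finset.mem_filter]
    refine ⟨mem_univ _, ⟨?_, ?_⟩, ?_⟩
    · rw [Finset.card_image_of_injective _ hsubinj, hcard]
    · intro u hu v hv huv
      rcases mem_image.mp hu with ⟨x, hx, rfl⟩
      rcases mem_image.mp hv with ⟨y, hy, rfl⟩
      have hne : x ≠ y := fun h => huv (by rw [h])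
      rw [circDist_translate]
      exact hgap x hx y hy hne
    · exact mem_image.mpr ⟨p, hp, sub_self p⟩
  · intro s hs
    obtain ⟨-, ⟨hcard, hgap⟩, hp⟩ := Finset.mem_filter.mp hs
    beta_reduce
    rw [Finset.mem_coe, Finset.mem_filter]
    refine ⟨mem_univ _, ⟨?_, ?_⟩, ?_⟩
    · rw [Finset.card_image_of_injective _ haddinj, hcard]
    · intro u hu v hv huv
      rcases mem_image.mp hu with ⟨x, hx, rfl⟩
      rcases mem_image.mp hv with ⟨y, hy, rfl⟩
      have hne : x ≠ y := fun h => huv (by rw [h])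
      have := circDist_translate (k := k) (-p) x y
      rw [sub_neg_eq_add, sub_neg_eq_add] at this
      rw [this]
      exact hgap x hx y hy hne
    · exact mem_image.mpr ⟨0, hp, zero_add p⟩
  · intro s _
    beta_reduce
    rw [Finset.image_image]
    have : ((fun x : ZMod k => x + p) ∘ (fun x => x - p)) = id := funext fun x => by simp
    rw [this, Finset.image_id]
  · intro s _
    beta_reduce
    rw [Finset.image_image]
    have : ((fun x : ZMod k => x - p) ∘ (fun x => x + p)) = id := funext fun x => by simp
    rw [this, Finset.image_id]

/-- (i) The number of ways to choose `n` of `k` equally spaced points on a line so that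
any two chosen points have distance `> a` is `C(k-a(n-1), n)`; (ii) the number of such
choices from `k` equally spaced points on a circle is `(k/(k-an))·C(k-an, n)` when
`k > an`. -/
theorem stmt19 (k n a : ℕ) :
    ((Finset.univ.filter fun s : Finset (Fin k) =>
        s.card = n ∧ ∀ i ∈ s, ∀ j ∈ s, i ≠ j → a < Nat.dist i.val j.val).card =
      (k - a * (n - 1)).choose n) ∧
    (∀ _ : a * n < k, ∀ _ : NeZero k,
      ((Finset.univ.filter fun s : Finset (ZMod k) =>
          s.card = n ∧ ∀ i ∈ s, ∀ j ∈ s, i ≠ j → a < circDist k i j).card : ℚ) =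
        (k : ℚ) / ((k : ℚ) - (a : ℚ) * n) * ((k - a * n).choose n : ℚ)) := by
  refine ⟨lineCount k n a, ?_⟩
  intro hak hk
  have hkpos : 0 < k := by omega
  have hkQ : (k : ℚ) ≠ 0 := Nat.cast_ne_zero.mpr (by omega)
  rcases Nat.eq_zero_or_pos n with rfl | hn
  · have hF : (Finset.univ.filter fun s : Finset (ZMod k) =>
        s.card = 0 ∧ ∀ i ∈ s, ∀ j ∈ s, i ≠ j → a < circDist k i j) = {∅} := by
      apply Finset.ext
      intro s
      simp only [Finset.mem_filter, Finset.mem_univ, true_and, Finset.mem_singleton,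
        Finset.card_eq_zero]
      constructor
      · exact fun h => h.1
      · rintro rfl
        exact ⟨rfl, fun i hi => absurd hi (Finset.notMem_empty _)⟩
    rw [hF]
    simp [hkQ]
  · -- main case
    set F := Finset.univ.filter fun s : Finset (ZMod k) =>
      s.card = n ∧ ∀ i ∈ s, ∀ j ∈ s, i ≠ j → a < circDist k i j with hF
    set C1 := ((k - (2*a+1)) - a * (n - 1 - 1)).choose (n-1) with hC1
    have hzero : (F.filter fun s => (0 : ZMod k) ∈ s).card = C1 := by
      rw [hF, Finset.filter_filter]
      exact zeroCount hn
    have hkey : n * F.card = k * C1 := by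
      have hcards : ∀ s ∈ F, s.card = n := fun s hs => (Finset.mem_filter.mp hs).2.1
      have e1 : ∑ s ∈ F, s.card = n * F.card := by
        rw [Finset.sum_congr rfl hcards, Finset.sum_const, smul_eq_mul, mul_comm]
      have epoint : ∀ s : Finset (ZMod k), s.card = ∑ p : ZMod k, if p ∈ s then 1 else 0 := by
        intro s
        rw [← Finset.card_filter, Finset.filter_mem_eq_inter, Finset.univ_inter]
      have e2 : ∑ s ∈ F, s.card = ∑ p : ZMod k, (F.filter fun s => p ∈ s).card := by
        calc ∑ s ∈ F, s.card = ∑ s ∈ F, ∑ p : ZMod k, (if p ∈ s then 1 else 0) :=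
              Finset.sum_congr rfl (fun s _ => epoint s)
          _ = ∑ p : ZMod k, ∑ s ∈ F, (if p ∈ s then 1 else 0) := Finset.sum_comm
          _ = ∑ p : ZMod k, (F.filter fun s => p ∈ s).card :=
              Finset.sum_congr rfl (fun p _ => (Finset.card_filter _ _).symm)
      have e3 : ∀ p : ZMod k, (F.filter fun s => p ∈ s).card = C1 := by
        intro p
        rw [← hzero, hF, Finset.filter_filter, Finset.filter_filter]
        exact transCount p
      rw [← e1, e2, Finset.sum_congr rfl (fun p _ => e3 p), Finset.sum_const, smul_eq_mul,
        Finset.card_univ, ZMod.card]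
    have hC1' : C1 = (k - a * n - 1).choose (n-1) := by
      rcases Nat.lt_or_ge n 2 with h2 | h2
      · have : n = 1 := by omega
        subst this
        simp [hC1]
      · have hX : a * n = a * (n - 1 - 1) + 2 * a := by
          have : a * (n - 1 - 1) + 2 * a = a * ((n - 1 - 1) + 2) := by ring
          rw [this]
          congr 1
          omega
        rw [hC1]
        congr 1
        rw [hX]
        omega
    have hid : (k - a * n) * (k - a * n - 1).choose (n-1) = (k - a * n).choose n * n := by
      have h1 : k - a * n - 1 + 1 = k - a * n := by omega
      have h2 : n - 1 + 1 = n := by omega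
      have := Nat.add_one_mul_choose_eq (k - a * n - 1) (n - 1)
      rw [h1, h2] at this
      exact this
    have hnQ : (n : ℚ) ≠ 0 := Nat.cast_ne_zero.mpr (by omega)
    have hcastsub : ((k - a * n : ℕ) : ℚ) = (k : ℚ) - (a : ℚ) * n := by
      rw [Nat.cast_sub hak.le, Nat.cast_mul]
    have hsubQ : (k : ℚ) - (a : ℚ) * n ≠ 0 := by
      rw [← hcastsub]
      exact Nat.cast_ne_zero.mpr (by omega)
    have hkeyQ : (n : ℚ) * F.card = (k : ℚ) * C1 := by
      exact_mod_cast congrArg (Nat.cast : ℕ → ℚ) hkey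
    have hidQ : ((k - a * n : ℕ) : ℚ) * ((k - a * n - 1).choose (n-1) : ℚ)
        = ((k - a * n).choose n : ℚ) * n := by
      exact_mod_cast congrArg (Nat.cast : ℕ → ℚ) hid
    rw [div_mul_eq_mul_div, eq_div_iff hsubQ]
    apply mul_left_cancel₀ hnQ
    calc (n : ℚ) * ((F.card : ℚ) * ((k : ℚ) - (a : ℚ) * n))
        = ((n : ℚ) * F.card) * ((k : ℚ) - (a : ℚ) * n) := by ring
      _ = ((k : ℚ) * C1) * ((k : ℚ) - (a : ℚ) * n) := by rw [hkeyQ]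
      _ = (k : ℚ) * (((k : ℚ) - (a : ℚ) * n) * ((k - a * n - 1).choose (n-1) : ℚ)) := by
          rw [hC1']; ring
      _ = (k : ℚ) * (((k - a * n).choose n : ℚ) * n) := by rw [← hcastsub, hidQ]
      _ = (n : ℚ) * ((k : ℚ) * ((k - a * n).choose n : ℚ)) := by ring
end
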